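/- arXiv:1505.00150 — 3 statements merged into one kernel-verified Lean document; each statement's English description precedes it below -/
import Mathlib

section
/- Let T>0, E a Banach space, V a Banach space densely and continuously embedded in E, and {A(t)}_{t∈[0,T]} a family of linear operators on E satisfying (Hyp'1) with constant ω>0, (Hyp3) and (Hyp4). Then the operator A_0 := (1/T)∫_0^T A(τ)dτ ∈ L(V,E), viewed as a densely defined operator in E with domain V, is closable, and its closure Â generates a C0 semigroup S_Â on E with ‖S_Â(t)‖ ≤ e^{−ωt} for all t≥0. -/
open Filter Topology Set MeasureTheory

noncomputable section

variable {E : Type*} [NormedAddCommGroup E] [NormedSpace ℝ E]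

/-- A C₀ semigroup of bounded linear operators on `E`. -/
structure IsC0Semigroup (S : ℝ → E →L[ℝ] E) : Prop where
  map_zero : S 0 = 1
  map_add : ∀ ⦃t s : ℝ⦄, 0 ≤ t → 0 ≤ s → S (t + s) = (S t).comp (S s)
  strong_cont : ∀ x : E, ContinuousOn (fun t => S t x) (Ici (0 : ℝ))

/-- `y` is the limit of `t⁻¹ • (S t x - x)` as `t → 0⁺`. -/
def GenLimitAt (S : ℝ → E →L[ℝ] E) (x y : E) : Prop :=
  Tendsto (fun t : ℝ => t⁻¹ • (S t x - x)) (𝓝[>] (0 : ℝ)) (𝓝 y)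

/-- The (unbounded) operator with domain `D` and action `A` is the generator of `S`. -/
def IsGeneratorOf (D : Set E) (A : E → E) (S : ℝ → E →L[ℝ] E) : Prop :=
  (∀ x, x ∈ D ↔ ∃ y, GenLimitAt S x y) ∧ ∀ x ∈ D, GenLimitAt S x (A x)

/-- Graph of an operator with domain `D` and action `A`. -/
def opGraph (D : Set E) (A : E → E) : Set (E × E) := {p | p.1 ∈ D ∧ p.2 = A p.1}

/-- The operator `(D, A)` is closable: the closure of its graph is a graph of a function. -/
def IsClosableOp (D : Set E) (A : E → E) : Prop :=
  ∀ x y₁ y₂, (x, y₁) ∈ closure (opGraph D A) → (x, y₂) ∈ closure (opGraph D A) → y₁ = y₂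

/-- `(D', A')` is the closure of the operator `(D, A)`. -/
def IsClosureOf (D' : Set E) (A' : E → E) (D : Set E) (A : E → E) : Prop :=
  (∀ x, x ∈ D' ↔ ∃ y, (x, y) ∈ closure (opGraph D A)) ∧
  ∀ x ∈ D', (x, A' x) ∈ closure (opGraph D A)

/-- `(D, A)` is a linear operator (its domain is a subspace on which it acts linearly). -/
def IsLinearOp (D : Set E) (A : E → E) : Prop :=
  (0 : E) ∈ D ∧
  (∀ x ∈ D, ∀ y ∈ D, x + y ∈ D ∧ A (x + y) = A x + A y) ∧
  (∀ (c : ℝ), ∀ x ∈ D, c • x ∈ D ∧ A (c • x) = c • A x)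

/-- An evolution system `{R(t,s)}_{0 ≤ s ≤ t ≤ T}` on `E`. -/
structure IsEvolutionSystem (T : ℝ) (R : ℝ → ℝ → E →L[ℝ] E) : Prop where
  refl : ∀ t ∈ Icc (0 : ℝ) T, R t t = 1
  comp : ∀ ⦃s r t : ℝ⦄, 0 ≤ s → s ≤ r → r ≤ t → t ≤ T → R t s = (R t r).comp (R r s)
  strong_cont : ∀ x : E, ContinuousOn (fun p : ℝ × ℝ => R p.1 p.2 x)
    {p : ℝ × ℝ | 0 ≤ p.2 ∧ p.2 ≤ p.1 ∧ p.1 ≤ T}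

/-- The parameter domain `{(t,s) : 0 ≤ s ≤ t ≤ T}` of an evolution system. -/
def evolDomain (T : ℝ) : Set (ℝ × ℝ) := {p : ℝ × ℝ | 0 ≤ p.2 ∧ p.2 ≤ p.1 ∧ p.1 ≤ T}

/-- A family `{R^{(λ)}}_{λ∈[0,1]}` of evolution systems is continuous: for every `x ∈ E`
and every sequence `λₙ → λ₀` in `[0,1]`, `R^{(λₙ)}(t,s)x → R^{(λ₀)}(t,s)x` uniformly in
`0 ≤ s ≤ t ≤ T`. -/
def IsContinuousEvolFamily (T : ℝ) (R : ℝ → ℝ → ℝ → E →L[ℝ] E) : Prop :=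
  ∀ (x : E) (l : ℕ → ℝ) (l0 : ℝ), (∀ n, l n ∈ Icc (0 : ℝ) 1) → l0 ∈ Icc (0 : ℝ) 1 →
    Tendsto l atTop (𝓝 l0) →
    TendstoUniformlyOn (fun n p => R (l n) p.1 p.2 x) (fun p => R l0 p.1 p.2 x)
      atTop (evolDomain T)

/-- The map `Σ(x,w,λ)(t) = R^{(λ)}(t,0)x + ∫₀ᵗ R^{(λ)}(t,s) w(s) ds`. -/
def evolMap (R : ℝ → ℝ → E →L[ℝ] E) (x : E) (w : ℝ → E) (t : ℝ) : E :=
  R t 0 x + ∫ s in (0 : ℝ)..t, R t s (w s)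

/-- The Hausdorff measure of noncompactness of a set `Q`. -/
def hausdorffMNC (Q : Set E) : ℝ :=
  sInf {r : ℝ | 0 < r ∧ ∃ c : Finset E, Q ⊆ ⋃ y ∈ c, Metric.ball y r}

variable {V : Type*} [NormedAddCommGroup V] [NormedSpace ℝ V]

/-- The data of a time-dependent family `{A(t)}` of (unbounded) linear operators on `E`:
domains `dom t`, actions `op t`, the C₀ semigroups `sg t = S_{A(t)}`, and the bounded
operators `bdd t ∈ L(V,E)` obtained by restricting `A(t)` to `V` (via the embedding `ι`). -/
structure HypData (E V : Type*) [NormedAddCommGroup E] [NormedSpace ℝ E]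
    [NormedAddCommGroup V] [NormedSpace ℝ V] where
  dom : ℝ → Set E
  op : ℝ → E → E
  sg : ℝ → ℝ → E →L[ℝ] E
  bdd : ℝ → V →L[ℝ] E

/-- Each `A(t)`, `t ∈ [0,T]`, generates the C₀ semigroup `sg t`. -/
def HypGen (T : ℝ) (A : HypData E V) : Prop :=
  ∀ t ∈ Icc (0 : ℝ) T, IsC0Semigroup (A.sg t) ∧ IsGeneratorOf (A.dom t) (A.op t) (A.sg t)

/-- Stability of a family of semigroups: for `0 ≤ t₁ ≤ ⋯ ≤ tₙ ≤ T`, `sᵢ ≥ 0`,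
`‖S(t₁)(s₁)⋯S(tₙ)(sₙ)‖ ≤ M e^{ω(s₁+⋯+sₙ)}`. -/
def StableFamily {F : Type*} [NormedRing F] (T : ℝ) (S : ℝ → ℝ → F) (M ω : ℝ) : Prop :=
  ∀ (n : ℕ) (ts ss : Fin n → ℝ), Monotone ts → (∀ i, ts i ∈ Icc (0 : ℝ) T) →
    (∀ i, 0 ≤ ss i) →
    ‖(List.ofFn fun i => S (ts i) (ss i)).prod‖ ≤ M * Real.exp (ω * ∑ i, ss i)

/-- Condition (Hyp'1): stability with `M = 1` and exponent `−ω`, `ω > 0`. -/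
def Hyp1' (T : ℝ) (A : HypData E V) (ω : ℝ) : Prop :=
  0 < ω ∧ StableFamily T A.sg 1 (-ω)

/-- Condition (Hyp1): stability with constants `M ≥ 1`, `ω ∈ ℝ`. -/
def Hyp1 (T : ℝ) (A : HypData E V) (M ω : ℝ) : Prop :=
  1 ≤ M ∧ StableFamily T A.sg M ω

variable (ι : V →L[ℝ] E)

/-- Condition (Hyp2): `V` is `A(t)`-admissible for each `t` and the family of parts of the
`A(t)` in `V` is stable with constants `M_V`, `ω_V`. -/
def Hyp2 (T : ℝ) (A : HypData E V) (MV ωV : ℝ) : Prop :=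
  ∃ SV : ℝ → ℝ → V →L[ℝ] V,
    (∀ t ∈ Icc (0 : ℝ) T, IsC0Semigroup (SV t)) ∧
    (∀ t ∈ Icc (0 : ℝ) T, ∀ s ≥ (0 : ℝ), ∀ v : V, ι (SV t s v) = A.sg t s (ι v)) ∧
    1 ≤ MV ∧ StableFamily T SV MV ωV

/-- Condition (Hyp3): `V ⊆ D(A(t))`, `A(t)|_V = bdd t ∈ L(V,E)`, and `t ↦ bdd t` is
norm-continuous on `[0,T]`. -/
def Hyp3 (T : ℝ) (A : HypData E V) : Prop :=
  (∀ t ∈ Icc (0 : ℝ) T, ∀ v : V, ι v ∈ A.dom t ∧ A.op t (ι v) = A.bdd t v) ∧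
  ContinuousOn A.bdd (Icc (0 : ℝ) T)

/-- The time average `A₀ = (1/T)∫₀ᵀ A(τ) dτ ∈ L(V,E)`. -/
def timeAvg (T : ℝ) (A : HypData E V) : V →L[ℝ] E :=
  (1 / T) • ∫ τ in (0 : ℝ)..T, A.bdd τ

/-- Condition (Hyp4): there is `μ₀ > −ω` such that `(μ₀ I − A₀)V` is dense in `E`. -/
def Hyp4 (T : ℝ) (A : HypData E V) (ω : ℝ) : Prop :=
  ∃ μ0 : ℝ, -ω < μ0 ∧ Dense (Set.range fun v : V => μ0 • ι v - timeAvg T A v)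

/-- Condition (Hyp5): `A(0) = A(T)` (equal domains and actions). -/
def Hyp5 (T : ℝ) (A : HypData E V) : Prop :=
  A.dom 0 = A.dom T ∧ ∀ x ∈ A.dom 0, A.op 0 x = A.op T x

/-- `R` is the evolution system determined by the family with restrictions `Abdd t ∈ L(V,E)`:
it is an evolution system satisfying the norm bound `‖R(t,s)‖ ≤ M e^{ω(t−s)}`, with
`(∂⁺/∂t)R(t,s)v|_{t=s} = A(s)v` and `(∂/∂s)R(t,s)v = −R(t,s)A(s)v` for `v ∈ V`. -/
def IsDeterminedEvolSystem (T : ℝ) (Abdd : ℝ → V →L[ℝ] E) (M ω : ℝ)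
    (R : ℝ → ℝ → E →L[ℝ] E) : Prop :=
  IsEvolutionSystem T R ∧
  (∀ s t : ℝ, 0 ≤ s → s ≤ t → t ≤ T → ‖R t s‖ ≤ M * Real.exp (ω * (t - s))) ∧
  (∀ v : V, ∀ s ∈ Ico (0 : ℝ) T,
    HasDerivWithinAt (fun t => R t s (ι v)) (Abdd s v) (Ici s) s) ∧
  (∀ v : V, ∀ s t : ℝ, 0 ≤ s → s ≤ t → t ≤ T →
    HasDerivWithinAt (fun r => R t r (ι v)) (-(R t s (Abdd s v))) (Icc (0 : ℝ) t) s)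

set_option linter.unusedSectionVars false
set_option synthInstance.maxHeartbeats 800000
set_option maxHeartbeats 1600000

namespace LP13

variable {D : Set E} {g : E → E}

/-- Bundled Lumer–Phillips hypotheses (contraction case). -/
structure Good (D : Set E) (g : E → E) : Prop where
  lin : IsLinearOp D g
  dens : Dense D
  diss : ∀ x ∈ D, ∀ l : ℝ, 0 < l → l * ‖x‖ ≤ ‖l • x - g x‖

def Gcl (D : Set E) (g : E → E) : Set (E × E) := closure (opGraph D g)

def Dcl (D : Set E) (g : E → E) : Set E := {x | ∃ y, (x, y) ∈ Gcl D g}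

open Classical in
def Acl (D : Set E) (g : E → E) : E → E := fun x =>
  if h : ∃ y, (x, y) ∈ Gcl D g then h.choose else 0

lemma isClosed_Gcl : IsClosed (Gcl D g) := isClosed_closure

lemma mem_Gcl_of_mem {x : E} (hx : x ∈ D) : (x, g x) ∈ Gcl D g :=
  subset_closure ⟨hx, rfl⟩

lemma g_zero (hlin : IsLinearOp D g) : g 0 = 0 := by
  have h := hlin.2.2 0 0 hlin.1
  simpa using h.2

def graphSubmodule (hlin : IsLinearOp D g) : Submodule ℝ (E × E) where
  carrier := opGraph D g
  zero_mem' := ⟨hlin.1, (g_zero hlin).symm⟩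
  add_mem' := by
    rintro ⟨x₁, y₁⟩ ⟨x₂, y₂⟩ ⟨h₁, e₁⟩ ⟨h₂, e₂⟩
    refine ⟨(hlin.2.1 x₁ h₁ x₂ h₂).1, ?_⟩
    simp only [Prod.fst_add, Prod.snd_add] at *
    rw [(hlin.2.1 x₁ h₁ x₂ h₂).2, e₁, e₂]
  smul_mem' := by
    rintro c ⟨x, y⟩ ⟨h, e⟩
    refine ⟨(hlin.2.2 c x h).1, ?_⟩
    simp only [Prod.smul_fst, Prod.smul_snd] at *
    rw [(hlin.2.2 c x h).2, e]

lemma lin_sub (hlin : IsLinearOp D g) {x y : E} (hx : x ∈ D) (hy : y ∈ D) :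
    x - y ∈ D ∧ g (x - y) = g x - g y := by
  have hneg := hlin.2.2 (-1) y hy
  have hadd := hlin.2.1 x hx _ hneg.1
  have e1 : x + (-1 : ℝ) • y = x - y := by rw [neg_one_smul, ← sub_eq_add_neg]
  rw [e1] at hadd
  exact ⟨hadd.1, by rw [hadd.2, hneg.2, neg_one_smul, ← sub_eq_add_neg]⟩

lemma Gcl_add (hlin : IsLinearOp D g) {p q : E × E} (hp : p ∈ Gcl D g) (hq : q ∈ Gcl D g) :
    p + q ∈ Gcl D g := by
  have h : Gcl D g = ((graphSubmodule hlin).topologicalClosure : Set (E × E)) := by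
    simp [Gcl, Submodule.topologicalClosure_coe, graphSubmodule]; rfl
  rw [h] at hp hq ⊢
  exact add_mem hp hq

lemma Gcl_smul (hlin : IsLinearOp D g) (c : ℝ) {p : E × E} (hp : p ∈ Gcl D g) :
    c • p ∈ Gcl D g := by
  have h : Gcl D g = ((graphSubmodule hlin).topologicalClosure : Set (E × E)) := by
    simp [Gcl, Submodule.topologicalClosure_coe, graphSubmodule]; rfl
  rw [h] at hp ⊢
  exact Submodule.smul_mem _ _ hp

lemma Gcl_sub (hlin : IsLinearOp D g) {p q : E × E} (hp : p ∈ Gcl D g) (hq : q ∈ Gcl D g) :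
    p - q ∈ Gcl D g := by
  have := Gcl_add hlin hp (Gcl_smul hlin (-1) hq)
  simpa [sub_eq_add_neg] using this

/-- dissipativity passes to the closure of the graph. -/
lemma Gcl_diss (hG : Good D g) {p : E × E} (hp : p ∈ Gcl D g) {l : ℝ} (hl : 0 < l) :
    l * ‖p.1‖ ≤ ‖l • p.1 - p.2‖ := by
  have hsub : Gcl D g ⊆ {q : E × E | l * ‖q.1‖ ≤ ‖l • q.1 - q.2‖} := by
    apply closure_minimal
    · rintro ⟨x, y⟩ ⟨hx, hy⟩
      simp only [mem_setOf_eq] at *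
      rw [hy]; exact hG.diss x hx l hl
    · apply isClosed_le
      · exact (continuous_const.mul (continuous_fst.norm))
      · exact ((continuous_fst.const_smul l).sub continuous_snd).norm
  exact hsub hp

/-- closability core: (0, y) in the closure forces y = 0. -/
lemma Gcl_zero (hG : Good D g) {y : E} (hy : ((0 : E), y) ∈ Gcl D g) : y = 0 := by
  -- step 1 : ∀ z ∈ D, ‖z‖ ≤ ‖z - y‖
  have step1 : ∀ z ∈ D, ‖z‖ ≤ ‖z - y‖ := by
    intro z hz
    have key : ∀ t : ℝ, 0 < t → ‖z‖ ≤ ‖z - y - t • g z‖ := by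
      intro t ht
      have hp : ((t • z, y + t • g z) : E × E) ∈ Gcl D g := by
        have h1 : ((0 : E), y) + t • (z, g z) ∈ Gcl D g :=
          Gcl_add hG.lin hy (Gcl_smul hG.lin t (mem_Gcl_of_mem hz))
        simpa [Prod.smul_mk] using h1
      have hd := Gcl_diss hG hp (inv_pos.mpr ht)
      simp only at hd
      have h2 : t⁻¹ • (t • z) = z := by
        rw [smul_smul, inv_mul_cancel₀ (ne_of_gt ht)]; simp
      rw [h2] at hd
      have h3 : t⁻¹ * ‖t • z‖ = ‖z‖ := by
        rw [norm_smul, Real.norm_eq_abs, abs_of_pos ht, ← mul_assoc,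
          inv_mul_cancel₀ (ne_of_gt ht)]; simp
      rw [h3] at hd
      calc ‖z‖ ≤ ‖z - (y + t • g z)‖ := hd
        _ = ‖z - y - t • g z‖ := by rw [sub_add_eq_sub_sub]
    -- let t → 0⁺
    have hlim : Tendsto (fun t : ℝ => ‖z - y - t • g z‖) (𝓝[>] 0) (𝓝 ‖z - y‖) := by
      have : Tendsto (fun t : ℝ => ‖z - y - t • g z‖) (𝓝 0) (𝓝 ‖z - y - (0:ℝ) • g z‖) := by
        apply Continuous.tendsto
        exact (((continuous_const).sub (continuous_id.smul continuous_const))).norm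
      simpa using this.mono_left nhdsWithin_le_nhds
    exact ge_of_tendsto hlim (eventually_nhdsWithin_of_forall (fun t ht => key t ht))
  -- step 2 : density
  have step2 : ∀ z : E, ‖z‖ ≤ ‖z - y‖ := by
    intro z
    have hcont : Continuous fun w : E => ‖w - y‖ - ‖w‖ :=
      ((continuous_id.sub continuous_const).norm).sub continuous_norm
    have hcl : ∀ w ∈ closure D, (0:ℝ) ≤ ‖w - y‖ - ‖w‖ := by
      intro w hw
      refine le_on_closure (f := fun _ => (0:ℝ)) (g := fun w : E => ‖w - y‖ - ‖w‖)
        (fun u hu => by simpa using step1 u hu) continuousOn_const hcont.continuousOn hw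
    have := hcl z (hG.dens z)
    linarith
  have h0 : ‖y‖ ≤ 0 := by simpa using step2 y
  exact norm_le_zero_iff.mp h0

lemma closable (hG : Good D g) : ∀ x y₁ y₂, (x, y₁) ∈ Gcl D g → (x, y₂) ∈ Gcl D g → y₁ = y₂ := by
  intro x y₁ y₂ h₁ h₂
  have h := Gcl_sub hG.lin h₁ h₂
  simp only [Prod.mk_sub_mk, sub_self] at h
  exact sub_eq_zero.mp (Gcl_zero hG h)

lemma Acl_spec (hG : Good D g) {x : E} (hx : x ∈ Dcl D g) : (x, Acl D g x) ∈ Gcl D g := by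
  have hx' : ∃ y, (x, y) ∈ Gcl D g := hx
  unfold Acl
  rw [dif_pos hx']
  exact hx'.choose_spec

lemma Gcl_iff (hG : Good D g) {x y : E} :
    (x, y) ∈ Gcl D g ↔ x ∈ Dcl D g ∧ y = Acl D g x := by
  constructor
  · intro h
    have hx : x ∈ Dcl D g := ⟨y, h⟩
    exact ⟨hx, closable hG x y _ h (Acl_spec hG hx)⟩
  · rintro ⟨hx, rfl⟩
    exact Acl_spec hG hx

lemma mem_Dcl_of_mem (hG : Good D g) {x : E} (hx : x ∈ D) : x ∈ Dcl D g :=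
  ⟨g x, mem_Gcl_of_mem hx⟩

lemma Acl_eq_of_mem (hG : Good D g) {x : E} (hx : x ∈ D) : Acl D g x = g x :=
  ((Gcl_iff hG).mp (mem_Gcl_of_mem hx)).2.symm

lemma Dcl_add (hG : Good D g) {x y : E} (hx : x ∈ Dcl D g) (hy : y ∈ Dcl D g) :
    x + y ∈ Dcl D g ∧ Acl D g (x + y) = Acl D g x + Acl D g y := by
  have h := Gcl_add hG.lin (Acl_spec hG hx) (Acl_spec hG hy)
  simp only [Prod.mk_add_mk] at h
  have := (Gcl_iff hG).mp h
  exact ⟨this.1, this.2.symm⟩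

lemma Dcl_smul (hG : Good D g) (c : ℝ) {x : E} (hx : x ∈ Dcl D g) :
    c • x ∈ Dcl D g ∧ Acl D g (c • x) = c • Acl D g x := by
  have h := Gcl_smul hG.lin c (Acl_spec hG hx)
  simp only [Prod.smul_mk] at h
  have := (Gcl_iff hG).mp h
  exact ⟨this.1, this.2.symm⟩

lemma Dcl_sub (hG : Good D g) {x y : E} (hx : x ∈ Dcl D g) (hy : y ∈ Dcl D g) :
    x - y ∈ Dcl D g ∧ Acl D g (x - y) = Acl D g x - Acl D g y := by
  have h := Gcl_sub hG.lin (Acl_spec hG hx) (Acl_spec hG hy)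
  simp only [Prod.mk_sub_mk] at h
  have := (Gcl_iff hG).mp h
  exact ⟨this.1, this.2.symm⟩

lemma Dcl_diss (hG : Good D g) {x : E} (hx : x ∈ Dcl D g) {l : ℝ} (hl : 0 < l) :
    l * ‖x‖ ≤ ‖l • x - Acl D g x‖ :=
  Gcl_diss hG (Acl_spec hG hx) hl

lemma Dcl_dense (hG : Good D g) : Dense (Dcl D g) :=
  hG.dens.mono (fun x hx => mem_Dcl_of_mem hG hx)

/-- injectivity of `l - Acl` on `Dcl`. -/
lemma Acl_inj (hG : Good D g) {x y : E} (hx : x ∈ Dcl D g) (hy : y ∈ Dcl D g)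
    {l : ℝ} (hl : 0 < l) (h : l • x - Acl D g x = l • y - Acl D g y) : x = y := by
  obtain ⟨hm, he⟩ := Dcl_sub hG hx hy
  have hd := Dcl_diss hG hm hl
  rw [he] at hd
  have h0 : l • (x - y) - (Acl D g x - Acl D g y)
      = (l • x - Acl D g x) - (l • y - Acl D g y) := by
    rw [smul_sub]; abel
  rw [h0, h, sub_self, norm_zero] at hd
  have : ‖x - y‖ = 0 := le_antisymm (nonpos_of_mul_nonpos_right ?_ hl) (norm_nonneg _)
  · exact sub_eq_zero.mp (norm_eq_zero.mp this)
  · linarith [hd]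

end LP13

namespace LP13

variable {E : Type*} [NormedAddCommGroup E] [NormedSpace ℝ E] [CompleteSpace E]
variable {D : Set E} {g : E → E}

/-- surjectivity of `l - Acl` -/
def SurjAt (D : Set E) (g : E → E) (l : ℝ) : Prop :=
  ∀ z : E, ∃ x ∈ Dcl D g, l • x - Acl D g x = z

lemma surj_l0 (hG : Good D g) {l0 : ℝ} (hl0 : 0 < l0)
    (hrange : Dense ((fun x => l0 • x - g x) '' D)) : SurjAt D g l0 := by
  intro z
  obtain ⟨u, hu, hulim⟩ := mem_closure_iff_seq_limit.mp (hrange z)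
  choose v hvD hvu using fun n => hu n
  -- v n ∈ D with l0 • v n - g (v n) = u n
  have hcau : CauchySeq (fun n => v n) := by
    rw [Metric.cauchySeq_iff]
    intro ε hε
    obtain ⟨N, hN⟩ := (Metric.cauchySeq_iff.mp hulim.cauchySeq) (l0 * ε) (by positivity)
    refine ⟨N, fun m hm n hn => ?_⟩
    obtain ⟨hmem, hglin⟩ := lin_sub hG.lin (hvD m) (hvD n)
    have hd := hG.diss _ hmem l0 hl0
    rw [hglin] at hd
    have hum := hvu m; have hun := hvu n
    simp only at hum hun
    have heq : l0 • (v m - v n) - (g (v m) - g (v n)) = u m - u n := by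
      rw [← hum, ← hun, smul_sub]; abel
    rw [heq] at hd
    have hdist := hN m hm n hn
    rw [dist_eq_norm] at hdist ⊢
    have hlt : l0 * ‖v m - v n‖ < l0 * ε := lt_of_le_of_lt hd hdist
    exact lt_of_mul_lt_mul_left hlt (le_of_lt hl0)
  obtain ⟨x, hx⟩ := cauchySeq_tendsto_of_complete hcau
  have hgv : Tendsto (fun n => g (v n)) atTop (𝓝 (l0 • x - z)) := by
    have heq : ∀ n, g (v n) = l0 • v n - u n := by
      intro n
      have := hvu n; simp only at this
      rw [← this]; abel
    simp_rw [heq]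
    exact (hx.const_smul l0).sub hulim
  have hmem : (x, l0 • x - z) ∈ Gcl D g := by
    have htt : Tendsto (fun n => ((v n, g (v n)) : E × E)) atTop (𝓝 (x, l0 • x - z)) :=
      hx.prodMk_nhds hgv
    exact isClosed_Gcl.mem_of_tendsto htt
      (Filter.Eventually.of_forall (fun n => mem_Gcl_of_mem (hvD n)))
  refine ⟨x, ⟨_, hmem⟩, ?_⟩
  have h2 := ((Gcl_iff hG).mp hmem).2
  rw [← h2]; abel

open Classical in
/-- the resolvent as a bare function -/
def resFn (D : Set E) (g : E → E) (l : ℝ) : E → E := fun z =>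
  if h : ∃ x, x ∈ Dcl D g ∧ l • x - Acl D g x = z then h.choose else 0

section Res
variable (hG : Good D g) {l : ℝ} (hl : 0 < l) (hs : SurjAt D g l)

include hG hl hs

lemma resFn_mem (z : E) : resFn D g l z ∈ Dcl D g ∧ l • resFn D g l z - Acl D g (resFn D g l z) = z := by
  have h : ∃ x, x ∈ Dcl D g ∧ l • x - Acl D g x = z := by
    obtain ⟨x, h1, h2⟩ := hs z; exact ⟨x, h1, h2⟩
  unfold resFn
  rw [dif_pos h]
  exact h.choose_spec

lemma resFn_eq {x : E} (hx : x ∈ Dcl D g) : resFn D g l (l • x - Acl D g x) = x := by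
  obtain ⟨hm, he⟩ := resFn_mem hG hl hs (l • x - Acl D g x)
  exact Acl_inj hG hm hx hl he

lemma resFn_add (z w : E) : resFn D g l (z + w) = resFn D g l z + resFn D g l w := by
  obtain ⟨hmz, hez⟩ := resFn_mem hG hl hs z
  obtain ⟨hmw, hew⟩ := resFn_mem hG hl hs w
  obtain ⟨hma, hea⟩ := Dcl_add hG hmz hmw
  have : l • (resFn D g l z + resFn D g l w) - Acl D g (resFn D g l z + resFn D g l w) = z + w := by
    rw [hea, smul_add]
    conv_rhs => rw [← hez, ← hew]
    abel
  rw [← this, resFn_eq hG hl hs hma]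

lemma resFn_smul (c : ℝ) (z : E) : resFn D g l (c • z) = c • resFn D g l z := by
  obtain ⟨hmz, hez⟩ := resFn_mem hG hl hs z
  obtain ⟨hma, hea⟩ := Dcl_smul hG c hmz
  have : l • (c • resFn D g l z) - Acl D g (c • resFn D g l z) = c • z := by
    rw [hea]
    conv_rhs => rw [← hez]
    module
  rw [← this, resFn_eq hG hl hs hma]

lemma resFn_norm (z : E) : ‖resFn D g l z‖ ≤ l⁻¹ * ‖z‖ := by
  obtain ⟨hmz, hez⟩ := resFn_mem hG hl hs z
  have hd := Dcl_diss hG hmz hl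
  rw [hez] at hd
  calc ‖resFn D g l z‖ = l⁻¹ * (l * ‖resFn D g l z‖) := by field_simp
    _ ≤ l⁻¹ * ‖z‖ := mul_le_mul_of_nonneg_left hd (by positivity)

/-- the resolvent as a continuous linear map -/
def resolvent : E →L[ℝ] E :=
  LinearMap.mkContinuous
    { toFun := resFn D g l
      map_add' := resFn_add hG hl hs
      map_smul' := resFn_smul hG hl hs }
    l⁻¹ (resFn_norm hG hl hs)

lemma resolvent_apply (z : E) : resolvent hG hl hs z = resFn D g l z := rfl

lemma resolvent_norm : ‖resolvent hG hl hs‖ ≤ l⁻¹ :=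
  LinearMap.mkContinuous_norm_le _ (by positivity) _

lemma resolvent_mem (z : E) : resolvent hG hl hs z ∈ Dcl D g := (resFn_mem hG hl hs z).1

lemma resolvent_spec (z : E) :
    l • resolvent hG hl hs z - Acl D g (resolvent hG hl hs z) = z := (resFn_mem hG hl hs z).2

lemma resolvent_eq {x : E} (hx : x ∈ Dcl D g) :
    resolvent hG hl hs (l • x - Acl D g x) = x := resFn_eq hG hl hs hx

end Res

/-- Neumann series extension of surjectivity. -/
lemma surj_of_near (hG : Good D g) {l μ : ℝ} (hl : 0 < l) (hs : SurjAt D g l)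
    (hμ : 0 < μ) (hnear : |μ - l| < l) : SurjAt D g μ := by
  set R := resolvent hG hl hs with hR
  have hnorm : ‖(μ - l) • R‖ < 1 := by
    have hns : ‖(μ - l) • R‖ = |μ - l| * ‖R‖ := by
      have := norm_smul (μ - l) R
      rwa [Real.norm_eq_abs] at this
    rw [hns]
    calc |μ - l| * ‖R‖ ≤ |μ - l| * l⁻¹ := by
          exact mul_le_mul_of_nonneg_left (resolvent_norm hG hl hs) (abs_nonneg _)
      _ < l * l⁻¹ := by
          apply mul_lt_mul_of_pos_right hnear (by positivity)
      _ = 1 := mul_inv_cancel₀ (ne_of_gt hl)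
  set u := Units.oneSub (-(((μ - l) • R))) (by rwa [norm_neg])
  intro z
  set w := (↑u⁻¹ : E →L[ℝ] E) z with hw
  refine ⟨R w, resolvent_mem hG hl hs w, ?_⟩
  have h1 : l • R w - Acl D g (R w) = w := resolvent_spec hG hl hs w
  have h2 : μ • R w - Acl D g (R w) = w + (μ - l) • R w := by
    have hsp : μ • R w = l • R w + (μ - l) • R w := by module
    rw [hsp]
    calc l • R w + (μ - l) • R w - Acl D g (R w)
        = (l • R w - Acl D g (R w)) + (μ - l) • R w := by abel
      _ = w + (μ - l) • R w := by rw [h1]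
  rw [h2]
  have h3 : (↑u : E →L[ℝ] E) = 1 + (μ - l) • R := by
    simp [u, Units.oneSub]
  have h4 : (↑u : E →L[ℝ] E) ((↑u⁻¹ : E →L[ℝ] E) z) = z := by
    have := u.mul_inv
    calc (↑u : E →L[ℝ] E) ((↑u⁻¹ : E →L[ℝ] E) z) = ((↑u * ↑u⁻¹ : E →L[ℝ] E)) z := rfl
      _ = z := by rw [this]; rfl
  calc w + (μ - l) • R w = (1 + (μ - l) • R) w := by
        simp [ContinuousLinearMap.add_apply]
    _ = (↑u : E →L[ℝ] E) w := by rw [h3]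
    _ = z := h4

lemma surj_all (hG : Good D g) {l0 : ℝ} (hl0 : 0 < l0)
    (hrange : Dense ((fun x => l0 • x - g x) '' D)) :
    ∀ l : ℝ, 0 < l → SurjAt D g l := by
  have hstep : ∀ L : ℝ, 0 < L → SurjAt D g L → ∀ μ, 0 < μ → μ < 2 * L → SurjAt D g μ := by
    intro L hL hs μ hμ hμ2
    apply surj_of_near hG hL hs hμ
    rw [abs_lt]; constructor <;> linarith
  have hpow : ∀ n : ℕ, SurjAt D g (l0 * (3/2)^n) := by
    intro n
    induction n with
    | zero => simpa using surj_l0 hG hl0 hrange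
    | succ k ih =>
        have hpos : 0 < l0 * (3/2)^k := by positivity
        apply hstep _ hpos ih
        · positivity
        · rw [pow_succ]; nlinarith [pow_pos (show (0:ℝ) < 3/2 by norm_num) k]
  intro l hl
  obtain ⟨n, hn⟩ := pow_unbounded_of_one_lt (l / l0) (show (1:ℝ) < 3/2 by norm_num)
  have hpos : 0 < l0 * (3/2)^n := by positivity
  apply hstep _ hpos (hpow n) l hl
  have h1 : l < (3/2:ℝ)^n * l0 := (div_lt_iff₀ hl0).mp hn
  nlinarith [hpos]

end LP13

namespace LP13
open Nat

variable {E : Type*} [NormedAddCommGroup E] [NormedSpace ℝ E] [CompleteSpace E]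
variable {D : Set E} {g : E → E}

noncomputable instance instNormedAlgebraRatCLM : NormedAlgebra ℚ (E →L[ℝ] E) :=
  NormedAlgebra.restrictScalars ℚ ℝ (E →L[ℝ] E)

lemma sub_rot {M : Type*} [AddCommGroup M] {a b c : M} (h : a - b = c) :
    a - c = b := by rw [← h]; abel

/-- `‖exp M‖ ≤ exp ‖M‖` for a bounded operator. -/
lemma norm_exp_le (M : E →L[ℝ] E) : ‖NormedSpace.exp M‖ ≤ Real.exp ‖M‖ := by
  have h1 : HasSum (fun n : ℕ => (n !⁻¹ : ℝ) • M ^ n) (NormedSpace.exp M) :=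
    NormedSpace.exp_series_hasSum_exp' M
  have h2 : HasSum (fun n : ℕ => (n !⁻¹ : ℝ) * ‖M‖ ^ n) (Real.exp ‖M‖) := by
    rw [Real.exp_eq_exp_ℝ]
    simpa [smul_eq_mul] using NormedSpace.exp_series_hasSum_exp' (𝕂 := ℝ) (‖M‖)
  have hbound : ∀ n : ℕ, ‖(n !⁻¹ : ℝ) • M ^ n‖ ≤ (n !⁻¹ : ℝ) * ‖M‖ ^ n := by
    intro n
    have hs := norm_smul ((n !⁻¹ : ℝ)) (M ^ n)
    rw [hs, Real.norm_eq_abs, abs_of_nonneg (by positivity)]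
    apply mul_le_mul_of_nonneg_left _ (by positivity)
    cases n with
    | zero => simp only [pow_zero]; exact ContinuousLinearMap.norm_id_le
    | succ k => exact norm_pow_le' M (Nat.succ_pos k)
  calc ‖NormedSpace.exp M‖ = ‖∑' n : ℕ, (n !⁻¹ : ℝ) • M ^ n‖ := by rw [h1.tsum_eq]
    _ ≤ ∑' n : ℕ, ‖(n !⁻¹ : ℝ) • M ^ n‖ := norm_tsum_le_tsum_norm
        (NormedSpace.norm_expSeries_summable' M)
    _ ≤ ∑' n : ℕ, (n !⁻¹ : ℝ) * ‖M‖ ^ n := Summable.tsum_le_tsum hbound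
        (NormedSpace.norm_expSeries_summable' M) h2.summable
    _ = Real.exp ‖M‖ := h2.tsum_eq

lemma exp_smul_one (c : ℝ) :
    NormedSpace.exp (c • (1 : E →L[ℝ] E)) = Real.exp c • (1 : E →L[ℝ] E) := by
  have h1 : c • (1 : E →L[ℝ] E) = algebraMap ℝ (E →L[ℝ] E) c := by
    rw [Algebra.algebraMap_eq_smul_one]
  rw [h1, ← NormedSpace.algebraMap_exp_comm, Algebra.algebraMap_eq_smul_one,
    Real.exp_eq_exp_ℝ]

/-- ε/3: pointwise convergence of uniformly bounded operators extends from a dense set. -/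
lemma dense_tendsto {Fn : ℕ → E →L[ℝ] E} {F : E →L[ℝ] E} {S : Set E} {C : ℝ}
    (hbd : ∀ n, ‖Fn n‖ ≤ C) (hFb : ‖F‖ ≤ C) (hd : Dense S)
    (hconv : ∀ x ∈ S, Tendsto (fun n => Fn n x) atTop (𝓝 (F x))) :
    ∀ x, Tendsto (fun n => Fn n x) atTop (𝓝 (F x)) := by
  intro x
  have hC : 0 ≤ C := le_trans (norm_nonneg _) (hbd 0)
  rw [Metric.tendsto_atTop]
  intro ε hε
  obtain ⟨x', hx'S, hdist⟩ := hd.exists_dist_lt x (show 0 < ε / (3 * (C + 1)) by positivity)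
  obtain ⟨N, hN⟩ := Metric.tendsto_atTop.mp (hconv x' hx'S) (ε / 3) (by positivity)
  refine ⟨N, fun n hn => ?_⟩
  have hsplit : Fn n x - F x = Fn n (x - x') + (Fn n x' - F x') + F (x' - x) := by
    simp only [map_sub]; abel
  have hxx' : ‖x - x'‖ < ε / (3 * (C + 1)) := by
    rw [← dist_eq_norm]; exact hdist
  have hb1 : ‖Fn n (x - x')‖ ≤ C * ‖x - x'‖ :=
    le_trans ((Fn n).le_opNorm _) (mul_le_mul_of_nonneg_right (hbd n) (norm_nonneg _))
  have hb3 : ‖F (x' - x)‖ ≤ C * ‖x - x'‖ := by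
    refine le_trans (F.le_opNorm _) ?_
    rw [norm_sub_rev]
    exact mul_le_mul_of_nonneg_right hFb (norm_nonneg _)
  have hb2 : ‖Fn n x' - F x'‖ < ε / 3 := by rw [← dist_eq_norm]; exact hN n hn
  have hCd : C * ‖x - x'‖ < ε / 3 := by
    calc C * ‖x - x'‖ ≤ (C + 1) * ‖x - x'‖ :=
          mul_le_mul_of_nonneg_right (by linarith) (norm_nonneg _)
      _ < (C + 1) * (ε / (3 * (C + 1))) := by
          apply mul_lt_mul_of_pos_left hxx' (by positivity)
      _ = ε / 3 := by field_simp
  rw [dist_eq_norm, hsplit]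
  calc ‖Fn n (x - x') + (Fn n x' - F x') + F (x' - x)‖
      ≤ ‖Fn n (x - x')‖ + ‖Fn n x' - F x'‖ + ‖F (x' - x)‖ := norm_add₃_le
    _ < ε / 3 + ε / 3 + ε / 3 := by
        apply add_lt_add (add_lt_add_of_le_of_lt (le_trans hb1 hCd.le) hb2)
        exact lt_of_le_of_lt hb3 hCd
    _ = ε := by ring

/-- ε/3: Cauchy-ness of uniformly bounded operator sequences extends from a dense set. -/
lemma dense_cauchy {Fn : ℕ → E →L[ℝ] E} {S : Set E} {C : ℝ}
    (hbd : ∀ n, ‖Fn n‖ ≤ C) (hd : Dense S)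
    (hc : ∀ x ∈ S, CauchySeq fun n => Fn n x) :
    ∀ x, CauchySeq fun n => Fn n x := by
  intro x
  have hC : 0 ≤ C := le_trans (norm_nonneg _) (hbd 0)
  rw [Metric.cauchySeq_iff]
  intro ε hε
  obtain ⟨x', hx'S, hdist⟩ := hd.exists_dist_lt x (show 0 < ε / (3 * (C + 1)) by positivity)
  obtain ⟨N, hN⟩ := Metric.cauchySeq_iff.mp (hc x' hx'S) (ε / 3) (by positivity)
  refine ⟨N, fun m hm n hn => ?_⟩
  have hxx' : ‖x - x'‖ < ε / (3 * (C + 1)) := by rw [← dist_eq_norm]; exact hdist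
  have hCd : C * ‖x - x'‖ < ε / 3 := by
    calc C * ‖x - x'‖ ≤ (C + 1) * ‖x - x'‖ :=
          mul_le_mul_of_nonneg_right (by linarith) (norm_nonneg _)
      _ < (C + 1) * (ε / (3 * (C + 1))) := by
          apply mul_lt_mul_of_pos_left hxx' (by positivity)
      _ = ε / 3 := by field_simp
  have hsplit : Fn m x - Fn n x = Fn m (x - x') + (Fn m x' - Fn n x') + Fn n (x' - x) := by
    simp only [map_sub]; abel
  have hb1 : ‖Fn m (x - x')‖ ≤ C * ‖x - x'‖ :=
    le_trans ((Fn m).le_opNorm _) (mul_le_mul_of_nonneg_right (hbd m) (norm_nonneg _))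
  have hb3 : ‖Fn n (x' - x)‖ ≤ C * ‖x - x'‖ := by
    refine le_trans ((Fn n).le_opNorm _) ?_
    rw [norm_sub_rev]
    exact mul_le_mul_of_nonneg_right (hbd n) (norm_nonneg _)
  have hb2 : ‖Fn m x' - Fn n x'‖ < ε / 3 := by rw [← dist_eq_norm]; exact hN m hm n hn
  rw [dist_eq_norm, hsplit]
  calc ‖Fn m (x - x') + (Fn m x' - Fn n x') + Fn n (x' - x)‖
      ≤ ‖Fn m (x - x')‖ + ‖Fn m x' - Fn n x'‖ + ‖Fn n (x' - x)‖ := norm_add₃_le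
    _ < ε / 3 + ε / 3 + ε / 3 := by
        apply add_lt_add (add_lt_add_of_le_of_lt (le_trans hb1 hCd.le) hb2)
        exact lt_of_le_of_lt hb3 hCd
    _ = ε := by ring

section Yosida

def lam (n : ℕ) : ℝ := (n : ℝ) + 1

lemma lam_pos (n : ℕ) : 0 < lam n := by unfold lam; positivity

lemma lam_tendsto : Tendsto lam atTop atTop :=
  tendsto_atTop_add_const_right _ 1 tendsto_natCast_atTop_atTop

variable (hG : Good D g) (hsj : ∀ l : ℝ, 0 < l → SurjAt D g l)

def Rop (n : ℕ) : E →L[ℝ] E := resolvent hG (lam_pos n) (hsj _ (lam_pos n))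

lemma Rop_norm (n : ℕ) : ‖Rop hG hsj n‖ ≤ (lam n)⁻¹ := resolvent_norm hG _ _

lemma Rop_mem (n : ℕ) (z : E) : Rop hG hsj n z ∈ Dcl D g := resolvent_mem hG _ _ z

lemma Rop_spec (n : ℕ) (z : E) :
    lam n • Rop hG hsj n z - Acl D g (Rop hG hsj n z) = z := resolvent_spec hG _ _ z

lemma Rop_eq (n : ℕ) {x : E} (hx : x ∈ Dcl D g) :
    Rop hG hsj n (lam n • x - Acl D g x) = x := resolvent_eq hG _ _ hx

lemma Rop_id (n : ℕ) {x : E} (hx : x ∈ Dcl D g) :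
    lam n • Rop hG hsj n x - Rop hG hsj n (Acl D g x) = x := by
  have h := Rop_eq hG hsj n hx
  rw [map_sub, (Rop hG hsj n).map_smul] at h
  exact h

/-- strong convergence `lam n • R n → 1`. -/
lemma lamRop_tendsto : ∀ x : E,
    Tendsto (fun n => lam n • Rop hG hsj n x) atTop (𝓝 x) := by
  have hbd : ∀ n, ‖lam n • Rop hG hsj n‖ ≤ 1 := by
    intro n
    have hns := norm_smul (lam n) (Rop hG hsj n)
    rw [hns, Real.norm_eq_abs, abs_of_pos (lam_pos n)]
    calc lam n * ‖Rop hG hsj n‖ ≤ lam n * (lam n)⁻¹ :=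
          mul_le_mul_of_nonneg_left (Rop_norm hG hsj n) (lam_pos n).le
      _ = 1 := mul_inv_cancel₀ (lam_pos n).ne'
  have h1 : ‖(1 : E →L[ℝ] E)‖ ≤ 1 := ContinuousLinearMap.norm_id_le
  have hDcl : ∀ x ∈ Dcl D g, Tendsto (fun n => lam n • Rop hG hsj n x) atTop (𝓝 x) := by
    intro x hx
    have heq : ∀ n, lam n • Rop hG hsj n x - x = Rop hG hsj n (Acl D g x) := by
      intro n
      exact sub_rot (Rop_id hG hsj n hx)
    have hnorm : ∀ n, ‖lam n • Rop hG hsj n x - x‖ ≤ (lam n)⁻¹ * ‖Acl D g x‖ := by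
      intro n
      rw [heq n]
      exact le_trans ((Rop hG hsj n).le_opNorm _)
        (mul_le_mul_of_nonneg_right (Rop_norm hG hsj n) (norm_nonneg _))
    have hz : Tendsto (fun n => (lam n)⁻¹ * ‖Acl D g x‖) atTop (𝓝 0) := by
      have := (lam_tendsto.inv_tendsto_atTop).mul_const ‖Acl D g x‖
      simpa using this
    rw [tendsto_iff_norm_sub_tendsto_zero]
    exact squeeze_zero (fun n => norm_nonneg _) hnorm hz
  have := dense_tendsto (F := (1 : E →L[ℝ] E)) hbd h1 (Dcl_dense hG)
    (by intro x hx; simpa using hDcl x hx)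
  intro x
  simpa using this x

def Bop (n : ℕ) : E →L[ℝ] E := (lam n) ^ 2 • Rop hG hsj n - (lam n) • (1 : E →L[ℝ] E)

lemma Bop_apply (n : ℕ) (x : E) :
    Bop hG hsj n x = (lam n) ^ 2 • Rop hG hsj n x - (lam n) • x := by
  simp [Bop]

lemma Bop_apply_mem (n : ℕ) {x : E} (hx : x ∈ Dcl D g) :
    Bop hG hsj n x = lam n • Rop hG hsj n (Acl D g x) := by
  have h5 := sub_rot (Rop_id hG hsj n hx)
  rw [Bop_apply]
  have heq2 : (lam n) ^ 2 • Rop hG hsj n x - lam n • x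
      = lam n • (lam n • Rop hG hsj n x - x) := by module
  rw [heq2, h5]

lemma Bop_tendsto {x : E} (hx : x ∈ Dcl D g) :
    Tendsto (fun n => Bop hG hsj n x) atTop (𝓝 (Acl D g x)) := by
  have : ∀ n, Bop hG hsj n x = lam n • Rop hG hsj n (Acl D g x) :=
    fun n => Bop_apply_mem hG hsj n hx
  simp_rw [this]
  exact lamRop_tendsto hG hsj (Acl D g x)

/-- resolvent identity / commutation -/
lemma Rop_comm_aux (n m : ℕ) (z : E) :
    Rop hG hsj n z - Rop hG hsj m z
      = (lam m - lam n) • Rop hG hsj n (Rop hG hsj m z) := by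
  set Rn := Rop hG hsj n
  set Rm := Rop hG hsj m
  have hmemL : Rn z - Rm z ∈ Dcl D g := (Dcl_sub hG (Rop_mem hG hsj n z) (Rop_mem hG hsj m z)).1
  have hmemR : (lam m - lam n) • Rn (Rm z) ∈ Dcl D g :=
    (Dcl_smul hG _ (Rop_mem hG hsj n _)).1
  apply Acl_inj hG hmemL hmemR (lam_pos n)
  have hL : lam n • (Rn z - Rm z) - Acl D g (Rn z - Rm z) = (lam m - lam n) • Rm z := by
    rw [(Dcl_sub hG (Rop_mem hG hsj n z) (Rop_mem hG hsj m z)).2, smul_sub]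
    have h1 : lam n • Rn z - Acl D g (Rn z) = z := Rop_spec hG hsj n z
    have h2 : lam m • Rm z - Acl D g (Rm z) = z := Rop_spec hG hsj m z
    have h3 : Acl D g (Rm z) = lam m • Rm z - z := (sub_rot h2).symm
    have h4 : Acl D g (Rn z) = lam n • Rn z - z := (sub_rot h1).symm
    rw [h3, h4]
    module
  have hR : lam n • ((lam m - lam n) • Rn (Rm z)) - Acl D g ((lam m - lam n) • Rn (Rm z))
      = (lam m - lam n) • Rm z := by
    rw [(Dcl_smul hG _ (Rop_mem hG hsj n _)).2]
    have h1 : lam n • Rn (Rm z) - Acl D g (Rn (Rm z)) = Rm z := Rop_spec hG hsj n _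
    have h4 : Acl D g (Rn (Rm z)) = lam n • Rn (Rm z) - Rm z := (sub_rot h1).symm
    rw [h4]
    module
  rw [hL, hR]

lemma Rop_commute (n m : ℕ) : Commute (Rop hG hsj n) (Rop hG hsj m) := by
  rcases eq_or_ne n m with rfl | hnm
  · exact Commute.refl _
  · have hlam : lam m - lam n ≠ 0 := by
      simp only [lam]
      intro h
      apply hnm
      have : (m : ℝ) = n := by linarith [sub_eq_zero.mp h]
      exact_mod_cast this.symm
    apply ContinuousLinearMap.ext
    intro z
    have h1 := Rop_comm_aux hG hsj n m z
    have h2 := Rop_comm_aux hG hsj m n z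
    have h4 : Rop hG hsj n z - Rop hG hsj m z
        = (lam m - lam n) • Rop hG hsj m (Rop hG hsj n z) := by
      calc Rop hG hsj n z - Rop hG hsj m z = -(Rop hG hsj m z - Rop hG hsj n z) := by abel
        _ = -((lam n - lam m) • Rop hG hsj m (Rop hG hsj n z)) := by rw [h2]
        _ = (lam m - lam n) • Rop hG hsj m (Rop hG hsj n z) := by module
    have h3 : (lam m - lam n) • Rop hG hsj n (Rop hG hsj m z)
        = (lam m - lam n) • Rop hG hsj m (Rop hG hsj n z) := by
      rw [← h1, h4]
    have := smul_right_injective E hlam (h3)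
    simpa [ContinuousLinearMap.mul_apply] using this

lemma Bop_commute (n m : ℕ) : Commute (Bop hG hsj n) (Bop hG hsj m) := by
  unfold Bop
  apply Commute.sub_left
  · apply Commute.sub_right
    · exact ((Rop_commute hG hsj n m).smul_left _).smul_right _
    · exact (((Commute.one_right _).smul_left _).smul_right _)
  · apply Commute.sub_right
    · exact (((Commute.one_left _).smul_left _).smul_right _)
    · exact (((Commute.one_left 1).smul_left _).smul_right _)

/-- contraction property of `exp (t • B n)` for `t ≥ 0`. -/
lemma exp_contraction (n : ℕ) {t : ℝ} (ht : 0 ≤ t) :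
    ‖NormedSpace.exp (t • Bop hG hsj n)‖ ≤ 1 := by
  have hsplit : t • Bop hG hsj n
      = (-(t * lam n)) • (1 : E →L[ℝ] E) + (t * (lam n) ^ 2) • Rop hG hsj n := by
    unfold Bop; module
  have hcomm : Commute ((-(t * lam n)) • (1 : E →L[ℝ] E)) ((t * (lam n) ^ 2) • Rop hG hsj n) :=
    ((Commute.one_left _).smul_left _).smul_right _
  rw [hsplit, NormedSpace.exp_add_of_commute hcomm, exp_smul_one]
  have h1 : ‖Real.exp (-(t * lam n)) • (1 : E →L[ℝ] E) * NormedSpace.exp ((t * (lam n) ^ 2) • Rop hG hsj n)‖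
      ≤ Real.exp (-(t * lam n)) * ‖NormedSpace.exp ((t * (lam n) ^ 2) • Rop hG hsj n)‖ := by
    rw [smul_mul_assoc, one_mul]
    have := norm_smul (Real.exp (-(t * lam n))) (NormedSpace.exp ((t * (lam n) ^ 2) • Rop hG hsj n))
    rw [this, Real.norm_eq_abs, abs_of_pos (Real.exp_pos _)]
  refine le_trans h1 ?_
  have h2 : ‖NormedSpace.exp ((t * (lam n) ^ 2) • Rop hG hsj n)‖ ≤ Real.exp (t * lam n) := by
    refine le_trans (norm_exp_le _) (Real.exp_le_exp.mpr ?_)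
    have hns := norm_smul (t * (lam n) ^ 2) (Rop hG hsj n)
    rw [hns, Real.norm_eq_abs, abs_of_nonneg (by positivity)]
    calc t * (lam n) ^ 2 * ‖Rop hG hsj n‖ ≤ t * (lam n) ^ 2 * (lam n)⁻¹ :=
          mul_le_mul_of_nonneg_left (Rop_norm hG hsj n) (by positivity)
      _ = t * lam n := by
          have hln := (lam_pos n).ne'
          field_simp
  calc Real.exp (-(t * lam n)) * ‖NormedSpace.exp ((t * (lam n) ^ 2) • Rop hG hsj n)‖
      ≤ Real.exp (-(t * lam n)) * Real.exp (t * lam n) :=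
        mul_le_mul_of_nonneg_left h2 (Real.exp_pos _).le
    _ = 1 := by rw [← Real.exp_add]; simp

end Yosida

end LP13

namespace LP13

variable {E : Type*} [NormedAddCommGroup E] [NormedSpace ℝ E] [CompleteSpace E]
variable {D : Set E} {g : E → E}

section Semigroup

variable (hG : Good D g) (hsj : ∀ l : ℝ, 0 < l → SurjAt D g l)

def Tn (n : ℕ) (t : ℝ) : E →L[ℝ] E := NormedSpace.exp ((max t 0) • Bop hG hsj n)

lemma Tn_norm (n : ℕ) (t : ℝ) : ‖Tn hG hsj n t‖ ≤ 1 :=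
  exp_contraction hG hsj n (le_max_right t 0)

lemma Tn_nonneg_eq (n : ℕ) {t : ℝ} (ht : 0 ≤ t) :
    Tn hG hsj n t = NormedSpace.exp (t • Bop hG hsj n) := by
  rw [Tn, max_eq_left ht]

/-- derivative of `t ↦ exp (t • B) x`. -/
lemma exp_deriv (n : ℕ) (x : E) (s : ℝ) :
    HasDerivAt (fun u : ℝ => NormedSpace.exp (u • Bop hG hsj n) x)
      (NormedSpace.exp (s • Bop hG hsj n) (Bop hG hsj n x)) s := by
  have h1 := hasDerivAt_exp_smul_const (𝕂 := ℝ) (Bop hG hsj n) s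
  have h2 := h1.clm_apply (hasDerivAt_const s x)
  simpa [ContinuousLinearMap.mul_apply] using h2

/-- the fundamental estimate `‖exp(tBn)x − exp(tBm)x‖ ≤ t‖Bn x − Bm x‖`. -/
lemma Tn_est (n m : ℕ) {t : ℝ} (ht : 0 ≤ t) (x : E) :
    ‖Tn hG hsj n t x - Tn hG hsj m t x‖ ≤ t * ‖Bop hG hsj n x - Bop hG hsj m x‖ := by
  set Bn' := Bop hG hsj n with hBn
  set Bm' := Bop hG hsj m with hBm
  set f : ℝ → E := fun s => NormedSpace.exp ((t - s) • Bm') (NormedSpace.exp (s • Bn') x)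
    with hf
  set f' : ℝ → E := fun s =>
    NormedSpace.exp ((t - s) • Bm') (NormedSpace.exp (s • Bn') (Bn' x - Bm' x)) with hf'
  have hderiv : ∀ s : ℝ, HasDerivAt f (f' s) s := by
    intro s
    have hc : HasDerivAt (fun s : ℝ => NormedSpace.exp ((t - s) • Bm'))
        ((-1 : ℝ) • (NormedSpace.exp ((t - s) • Bm') * Bm')) s := by
      have h1 := hasDerivAt_exp_smul_const (𝕂 := ℝ) Bm' (t - s)
      have h2 : HasDerivAt (fun u : ℝ => t - u) (-1 : ℝ) s := by
        simpa using (hasDerivAt_id s).const_sub t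
      exact h1.scomp s h2
    have hu : HasDerivAt (fun s : ℝ => NormedSpace.exp (s • Bn') x)
        (NormedSpace.exp (s • Bn') (Bn' x)) s := exp_deriv hG hsj n x s
    have h3 := hc.clm_apply hu
    have hcommBm : Bm' * NormedSpace.exp (s • Bn') = NormedSpace.exp (s • Bn') * Bm' := by
      have : Commute Bm' (s • Bn') := ((Bop_commute hG hsj m n)).smul_right s
      exact (this.exp_right)
    have heq : ((-1 : ℝ) • (NormedSpace.exp ((t - s) • Bm') * Bm'))
          (NormedSpace.exp (s • Bn') x)
        + NormedSpace.exp ((t - s) • Bm') (NormedSpace.exp (s • Bn') (Bn' x)) = f' s := by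
      have e1 : ((-1 : ℝ) • (NormedSpace.exp ((t - s) • Bm') * Bm'))
            (NormedSpace.exp (s • Bn') x)
          = -(NormedSpace.exp ((t - s) • Bm') ((Bm' * NormedSpace.exp (s • Bn')) x)) := by
        simp [ContinuousLinearMap.mul_apply]
      rw [e1, hcommBm]
      simp only [hf', ContinuousLinearMap.mul_apply, map_sub]
      abel
    rw [← heq]
    exact h3
  have hbound : ∀ s ∈ Icc (0:ℝ) t, ‖f' s‖ ≤ ‖Bn' x - Bm' x‖ := by
    intro s hs
    have h1 : ‖NormedSpace.exp ((t - s) • Bm')‖ ≤ 1 :=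
      exp_contraction hG hsj m (by linarith [hs.2])
    have h2 : ‖NormedSpace.exp (s • Bn')‖ ≤ 1 := exp_contraction hG hsj n hs.1
    calc ‖f' s‖ ≤ ‖NormedSpace.exp ((t - s) • Bm')‖ *
          ‖NormedSpace.exp (s • Bn') (Bn' x - Bm' x)‖ := ContinuousLinearMap.le_opNorm _ _
      _ ≤ 1 * (‖NormedSpace.exp (s • Bn')‖ * ‖Bn' x - Bm' x‖) := by
          apply mul_le_mul h1 (ContinuousLinearMap.le_opNorm _ _) (norm_nonneg _) zero_le_one
      _ ≤ 1 * (1 * ‖Bn' x - Bm' x‖) := by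
          apply mul_le_mul_of_nonneg_left _ zero_le_one
          exact mul_le_mul_of_nonneg_right h2 (norm_nonneg _)
      _ = ‖Bn' x - Bm' x‖ := by ring
  have hkey := Convex.norm_image_sub_le_of_norm_hasDerivWithin_le
    (f := f) (f' := f') (C := ‖Bn' x - Bm' x‖)
    (fun s hs => (hderiv s).hasDerivWithinAt) hbound (convex_Icc 0 t)
    (left_mem_Icc.mpr ht) (right_mem_Icc.mpr ht)
  have hft : f t = NormedSpace.exp (t • Bn') x := by
    simp [hf, NormedSpace.exp_zero]
  have hf0 : f 0 = NormedSpace.exp (t • Bm') x := by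
    simp [hf, NormedSpace.exp_zero]
  rw [hft, hf0] at hkey
  rw [Tn_nonneg_eq hG hsj n ht, Tn_nonneg_eq hG hsj m ht]
  calc ‖NormedSpace.exp (t • Bn') x - NormedSpace.exp (t • Bm') x‖
      ≤ ‖Bn' x - Bm' x‖ * ‖t - 0‖ := hkey
    _ = t * ‖Bn' x - Bm' x‖ := by
        rw [sub_zero, Real.norm_eq_abs, abs_of_nonneg ht]; ring

lemma Tn_est' (n m : ℕ) (t : ℝ) (x : E) :
    ‖Tn hG hsj n t x - Tn hG hsj m t x‖ ≤ (max t 0) * ‖Bop hG hsj n x - Bop hG hsj m x‖ := by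
  have h := Tn_est hG hsj n m (le_max_right t 0) x
  rw [Tn_nonneg_eq hG hsj n (le_max_right t 0), Tn_nonneg_eq hG hsj m (le_max_right t 0)] at h
  simpa [Tn, max_assoc] using h

lemma Tn_cauchy (t : ℝ) (x : E) : CauchySeq (fun n => Tn hG hsj n t x) := by
  apply dense_cauchy (C := 1) (fun n => Tn_norm hG hsj n t) (Dcl_dense hG)
  intro y hy
  set τ := max t 0 with hτ
  have hB : CauchySeq (fun n => Bop hG hsj n y) := (Bop_tendsto hG hsj hy).cauchySeq
  rw [Metric.cauchySeq_iff]
  intro ε hε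
  obtain ⟨N, hN⟩ := Metric.cauchySeq_iff.mp hB (ε / (τ + 1)) (by positivity)
  refine ⟨N, fun a ha b hb => ?_⟩
  have h1 := Tn_est' hG hsj a b t y
  rw [dist_eq_norm]
  calc ‖Tn hG hsj a t y - Tn hG hsj b t y‖ ≤ τ * ‖Bop hG hsj a y - Bop hG hsj b y‖ := h1
    _ ≤ τ * dist (Bop hG hsj a y) (Bop hG hsj b y) := by rw [dist_eq_norm]
    _ < (τ + 1) * (ε / (τ + 1)) := by
        have hτ0 : 0 ≤ τ := le_max_right t 0
        have hd := hN a ha b hb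
        have hd0 : 0 ≤ dist (Bop hG hsj a y) (Bop hG hsj b y) := dist_nonneg
        nlinarith
    _ = ε := by
        have h0 : 0 ≤ τ := le_max_right t 0
        field_simp [(show τ + 1 ≠ 0 by linarith)]
  
def TlimFn (t : ℝ) (x : E) : E :=
  (cauchySeq_tendsto_of_complete (Tn_cauchy hG hsj t x)).choose

lemma Tn_tendsto (t : ℝ) (x : E) :
    Tendsto (fun n => Tn hG hsj n t x) atTop (𝓝 (TlimFn hG hsj t x)) :=
  (cauchySeq_tendsto_of_complete (Tn_cauchy hG hsj t x)).choose_spec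

def Tlim (t : ℝ) : E →L[ℝ] E :=
  LinearMap.mkContinuous
    { toFun := TlimFn hG hsj t
      map_add' := fun x y => by
        apply tendsto_nhds_unique (Tn_tendsto hG hsj t (x + y))
        simpa [map_add] using (Tn_tendsto hG hsj t x).add (Tn_tendsto hG hsj t y)
      map_smul' := fun c x => by
        apply tendsto_nhds_unique (Tn_tendsto hG hsj t (c • x))
        simpa [_root_.map_smul] using (Tn_tendsto hG hsj t x).const_smul c }
    1
    (fun x => by
      have h := (Tn_tendsto hG hsj t x).norm
      apply le_of_tendsto h
      filter_upwards with n
      calc ‖Tn hG hsj n t x‖ ≤ ‖Tn hG hsj n t‖ * ‖x‖ := ContinuousLinearMap.le_opNorm _ _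
        _ ≤ 1 * ‖x‖ := mul_le_mul_of_nonneg_right (Tn_norm hG hsj n t) (norm_nonneg _))

lemma Tlim_apply (t : ℝ) (x : E) : Tlim hG hsj t x = TlimFn hG hsj t x := rfl

lemma Tlim_tendsto (t : ℝ) (x : E) :
    Tendsto (fun n => Tn hG hsj n t x) atTop (𝓝 (Tlim hG hsj t x)) := Tn_tendsto hG hsj t x

lemma Tlim_norm (t : ℝ) : ‖Tlim hG hsj t‖ ≤ 1 :=
  LinearMap.mkContinuous_norm_le _ zero_le_one _

lemma Tlim_zero : Tlim hG hsj 0 = 1 := by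
  apply ContinuousLinearMap.ext
  intro x
  apply tendsto_nhds_unique (Tlim_tendsto hG hsj 0 x)
  have : ∀ n, Tn hG hsj n 0 x = x := by
    intro n
    simp [Tn, NormedSpace.exp_zero]
  simp_rw [this]
  simpa using tendsto_const_nhds

lemma Tlim_add {t s : ℝ} (ht : 0 ≤ t) (hs : 0 ≤ s) :
    Tlim hG hsj (t + s) = (Tlim hG hsj t).comp (Tlim hG hsj s) := by
  apply ContinuousLinearMap.ext
  intro x
  apply tendsto_nhds_unique (Tlim_tendsto hG hsj (t + s) x)
  have hsplit : ∀ n, Tn hG hsj n (t + s) x = Tn hG hsj n t (Tn hG hsj n s x) := by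
    intro n
    rw [Tn_nonneg_eq hG hsj n (by linarith), Tn_nonneg_eq hG hsj n ht, Tn_nonneg_eq hG hsj n hs]
    have hcomm : Commute (t • Bop hG hsj n) (s • Bop hG hsj n) :=
      ((Commute.refl _).smul_left t).smul_right s
    have : (t + s) • Bop hG hsj n = t • Bop hG hsj n + s • Bop hG hsj n := add_smul t s _
    rw [this, NormedSpace.exp_add_of_commute hcomm]
    rfl
  simp_rw [hsplit]
  rw [ContinuousLinearMap.comp_apply]
  -- show Tn n t (Tn n s x) → Tlim t (Tlim s x)
  rw [tendsto_iff_norm_sub_tendsto_zero]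
  have hb : ∀ n, ‖Tn hG hsj n t (Tn hG hsj n s x) - Tlim hG hsj t (Tlim hG hsj s x)‖
      ≤ ‖Tn hG hsj n s x - Tlim hG hsj s x‖
        + ‖Tn hG hsj n t (Tlim hG hsj s x) - Tlim hG hsj t (Tlim hG hsj s x)‖ := by
    intro n
    have hdecomp : Tn hG hsj n t (Tn hG hsj n s x) - Tlim hG hsj t (Tlim hG hsj s x)
        = Tn hG hsj n t (Tn hG hsj n s x - Tlim hG hsj s x)
          + (Tn hG hsj n t (Tlim hG hsj s x) - Tlim hG hsj t (Tlim hG hsj s x)) := by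
      simp only [map_sub]; abel
    rw [hdecomp]
    refine le_trans (norm_add_le _ _) ?_
    gcongr
    calc ‖Tn hG hsj n t (Tn hG hsj n s x - Tlim hG hsj s x)‖
        ≤ ‖Tn hG hsj n t‖ * ‖Tn hG hsj n s x - Tlim hG hsj s x‖ :=
          ContinuousLinearMap.le_opNorm _ _
      _ ≤ 1 * ‖Tn hG hsj n s x - Tlim hG hsj s x‖ :=
          mul_le_mul_of_nonneg_right (Tn_norm hG hsj n t) (norm_nonneg _)
      _ = ‖Tn hG hsj n s x - Tlim hG hsj s x‖ := one_mul _
  have h1 : Tendsto (fun n => ‖Tn hG hsj n s x - Tlim hG hsj s x‖) atTop (𝓝 0) := by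
    rw [← tendsto_iff_norm_sub_tendsto_zero]
    exact Tlim_tendsto hG hsj s x
  have h2 : Tendsto (fun n => ‖Tn hG hsj n t (Tlim hG hsj s x)
      - Tlim hG hsj t (Tlim hG hsj s x)‖) atTop (𝓝 0) := by
    rw [← tendsto_iff_norm_sub_tendsto_zero]
    exact Tlim_tendsto hG hsj t (Tlim hG hsj s x)
  have hsum := h1.add h2
  rw [add_zero] at hsum
  exact squeeze_zero (fun n => norm_nonneg _) hb hsum

/-- rate of convergence on `Dcl`. -/
lemma Tlim_rate {x : E} (hx : x ∈ Dcl D g) (k : ℕ) (t : ℝ) :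
    ‖Tn hG hsj k t x - Tlim hG hsj t x‖ ≤ (max t 0) * ‖Bop hG hsj k x - Acl D g x‖ := by
  have hlim1 : Tendsto (fun m => ‖Tn hG hsj k t x - Tn hG hsj m t x‖) atTop
      (𝓝 ‖Tn hG hsj k t x - Tlim hG hsj t x‖) :=
    (((Tlim_tendsto hG hsj t x).const_sub _).norm)
  have hlim2 : Tendsto (fun m => (max t 0) * ‖Bop hG hsj k x - Bop hG hsj m x‖) atTop
      (𝓝 ((max t 0) * ‖Bop hG hsj k x - Acl D g x‖)) :=
    (((Bop_tendsto hG hsj hx).const_sub _).norm).const_mul _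
  exact le_of_tendsto_of_tendsto hlim1 hlim2
    (Filter.Eventually.of_forall (fun m => Tn_est' hG hsj k m t x))

lemma Tn_cont (k : ℕ) (x : E) : Continuous fun t => Tn hG hsj k t x := by
  have h1 : Continuous fun t : ℝ => (max t 0) • Bop hG hsj k :=
    (continuous_id.max continuous_const).smul continuous_const
  have h2 : Continuous fun t : ℝ => Tn hG hsj k t := NormedSpace.exp_continuous.comp h1
  exact (ContinuousLinearMap.apply ℝ E x).continuous.comp h2

lemma Tlim_cont_mem {x : E} (hx : x ∈ Dcl D g) : Continuous fun t => Tlim hG hsj t x := by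
  rw [continuous_iff_continuousAt]
  intro t₀
  rw [ContinuousAt, Metric.tendsto_nhds]
  intro ε hε
  set r := max t₀ 0 + 1 with hr
  have hr0 : 0 < r := by have := le_max_right t₀ 0; simp only [hr]; linarith
  obtain ⟨k, hk⟩ : ∃ k, ‖Bop hG hsj k x - Acl D g x‖ < ε / (4 * r) := by
    have := Metric.tendsto_atTop.mp (Bop_tendsto hG hsj hx) (ε / (4 * r)) (by positivity)
    obtain ⟨N, hN⟩ := this
    exact ⟨N, by rw [← dist_eq_norm]; exact hN N le_rfl⟩
  have hcont := (Tn_cont hG hsj k x).continuousAt (x := t₀)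
  rw [ContinuousAt, Metric.tendsto_nhds] at hcont
  have hev := hcont (ε / 4) (by positivity)
  have hball : ∀ᶠ t in 𝓝 t₀, |t - t₀| < 1 := by
    have := Metric.ball_mem_nhds t₀ one_pos
    filter_upwards [this] with t ht
    rwa [Metric.mem_ball, Real.dist_eq] at ht
  filter_upwards [hev, hball] with t hev1 hball1
  have hmax : max t 0 ≤ r := by
    rcases le_or_gt t 0 with h | h
    · simp only [hr]; rw [max_eq_right h]; positivity
    · rw [max_eq_left h.le]
      obtain ⟨hb1, hb2⟩ := abs_lt.mp hball1
      have h3 := le_max_left t₀ 0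
      simp only [hr]
      linarith
  have hrate1 : ‖Tlim hG hsj t x - Tn hG hsj k t x‖ ≤ r * (ε / (4 * r)) := by
    rw [norm_sub_rev]
    refine le_trans (Tlim_rate hG hsj hx k t) ?_
    apply mul_le_mul hmax hk.le (norm_nonneg _) hr0.le
  have hrate2 : ‖Tlim hG hsj t₀ x - Tn hG hsj k t₀ x‖ ≤ r * (ε / (4 * r)) := by
    rw [norm_sub_rev]
    refine le_trans (Tlim_rate hG hsj hx k t₀) ?_
    apply mul_le_mul (by simp only [hr]; linarith) hk.le (norm_nonneg _) hr0.le
  have hmid : ‖Tn hG hsj k t x - Tn hG hsj k t₀ x‖ < ε / 4 := by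
    rw [← dist_eq_norm]; exact hev1
  have hre : r * (ε / (4 * r)) = ε / 4 := by field_simp
  rw [dist_eq_norm]
  calc ‖Tlim hG hsj t x - Tlim hG hsj t₀ x‖
      ≤ ‖Tlim hG hsj t x - Tn hG hsj k t x‖ + ‖Tn hG hsj k t x - Tn hG hsj k t₀ x‖
        + ‖Tn hG hsj k t₀ x - Tlim hG hsj t₀ x‖ := by
        have : Tlim hG hsj t x - Tlim hG hsj t₀ x
            = (Tlim hG hsj t x - Tn hG hsj k t x) + (Tn hG hsj k t x - Tn hG hsj k t₀ x)
              + (Tn hG hsj k t₀ x - Tlim hG hsj t₀ x) := by abel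
        rw [this]; exact norm_add₃_le
    _ < r * (ε / (4 * r)) + ε / 4 + r * (ε / (4 * r)) := by
        apply add_lt_add_of_lt_of_le (add_lt_add_of_le_of_lt hrate1 hmid)
        rw [norm_sub_rev]; exact hrate2
    _ = 3 * (ε / 4) := by rw [hre]; ring
    _ < ε := by linarith

lemma Tlim_cont (x : E) : Continuous fun t => Tlim hG hsj t x := by
  obtain ⟨xj, hxjS, hxj⟩ := mem_closure_iff_seq_limit.mp ((Dcl_dense hG) x)
  have huniform : TendstoUniformly (fun j t => Tlim hG hsj t (xj j))
      (fun t => Tlim hG hsj t x) atTop := by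
    rw [Metric.tendstoUniformly_iff]
    intro ε hε
    have := Metric.tendsto_atTop.mp hxj (ε / 2) (by positivity)
    obtain ⟨N, hN⟩ := this
    filter_upwards [eventually_ge_atTop N] with j hj t
    have hd := hN j hj
    rw [dist_eq_norm] at hd ⊢
    calc ‖Tlim hG hsj t x - Tlim hG hsj t (xj j)‖ = ‖Tlim hG hsj t (x - xj j)‖ := by
          rw [map_sub]
      _ ≤ ‖Tlim hG hsj t‖ * ‖x - xj j‖ := ContinuousLinearMap.le_opNorm _ _
      _ ≤ 1 * ‖x - xj j‖ := mul_le_mul_of_nonneg_right (Tlim_norm hG hsj t) (norm_nonneg _)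
      _ < ε := by
          rw [one_mul, norm_sub_rev]
          exact lt_of_lt_of_le hd (by linarith)
  exact huniform.continuous (Filter.Eventually.of_forall
    (fun j => Tlim_cont_mem hG hsj (hxjS j))).frequently

lemma Tlim_isC0 : (Tlim hG hsj 0 = (1 : E →L[ℝ] E))
    ∧ (∀ ⦃t s : ℝ⦄, 0 ≤ t → 0 ≤ s → Tlim hG hsj (t + s) = (Tlim hG hsj t).comp (Tlim hG hsj s))
    ∧ ∀ x : E, ContinuousOn (fun t => Tlim hG hsj t x) (Ici (0 : ℝ)) :=
  ⟨Tlim_zero hG hsj, fun t s ht hs => Tlim_add hG hsj ht hs,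
    fun x => (Tlim_cont hG hsj x).continuousOn⟩

end Semigroup

end LP13

namespace LP13

variable {E : Type*} [NormedAddCommGroup E] [NormedSpace ℝ E] [CompleteSpace E]
variable {D : Set E} {g : E → E}

section Generator

variable (hG : Good D g) (hsj : ∀ l : ℝ, 0 < l → SurjAt D g l)

/-- right derivative of `t ↦ exp (t•B) x` at `0`. -/
lemma Tn_slope (k : ℕ) (x : E) :
    Tendsto (fun t : ℝ => t⁻¹ • (NormedSpace.exp (t • Bop hG hsj k) x - x))
      (𝓝[>] 0) (𝓝 (Bop hG hsj k x)) := by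
  have hd : HasDerivAt (fun t : ℝ => NormedSpace.exp (t • Bop hG hsj k) x)
      (Bop hG hsj k x) 0 := by
    have := exp_deriv hG hsj k x 0
    simpa [NormedSpace.exp_zero] using this
  have hs := hasDerivAt_iff_tendsto_slope.mp hd
  have hmono : 𝓝[>] (0:ℝ) ≤ 𝓝[≠] (0:ℝ) :=
    nhdsWithin_mono 0 (fun t ht => ne_of_gt ht)
  have := hs.mono_left hmono
  apply this.congr'
  filter_upwards [self_mem_nhdsWithin] with t ht
  rw [slope_def_module]
  simp [NormedSpace.exp_zero]

/-- generator limit on `Dcl`. -/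
lemma Tlim_genlim {x : E} (hx : x ∈ Dcl D g) :
    Tendsto (fun t : ℝ => t⁻¹ • (Tlim hG hsj t x - x)) (𝓝[>] 0) (𝓝 (Acl D g x)) := by
  rw [Metric.tendsto_nhds]
  intro ε hε
  obtain ⟨k, hk⟩ : ∃ k, ‖Bop hG hsj k x - Acl D g x‖ < ε / 3 := by
    obtain ⟨N, hN⟩ := Metric.tendsto_atTop.mp (Bop_tendsto hG hsj hx) (ε / 3) (by positivity)
    exact ⟨N, by rw [← dist_eq_norm]; exact hN N le_rfl⟩
  have hslope := Metric.tendsto_nhds.mp (Tn_slope hG hsj k x) (ε / 3) (by positivity)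
  filter_upwards [hslope, self_mem_nhdsWithin] with t ht1 (ht2 : 0 < t)
  have hTn : Tn hG hsj k t x = NormedSpace.exp (t • Bop hG hsj k) x := by
    rw [Tn_nonneg_eq hG hsj k ht2.le]
  have hsplit : t⁻¹ • (Tlim hG hsj t x - x) - Acl D g x
      = t⁻¹ • (Tlim hG hsj t x - Tn hG hsj k t x)
        + (t⁻¹ • (NormedSpace.exp (t • Bop hG hsj k) x - x) - Bop hG hsj k x)
        + (Bop hG hsj k x - Acl D g x) := by
    rw [← hTn, smul_sub, smul_sub, smul_sub]
    abel
  have hb1 : ‖t⁻¹ • (Tlim hG hsj t x - Tn hG hsj k t x)‖ ≤ ε / 3 := by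
    have hns := norm_smul (t⁻¹) (Tlim hG hsj t x - Tn hG hsj k t x)
    rw [hns, Real.norm_eq_abs, abs_of_pos (inv_pos.mpr ht2)]
    rw [norm_sub_rev]
    have hr := Tlim_rate hG hsj hx k t
    rw [max_eq_left ht2.le] at hr
    calc t⁻¹ * ‖Tn hG hsj k t x - Tlim hG hsj t x‖
        ≤ t⁻¹ * (t * ‖Bop hG hsj k x - Acl D g x‖) :=
          mul_le_mul_of_nonneg_left hr (by positivity)
      _ = ‖Bop hG hsj k x - Acl D g x‖ := by field_simp
      _ ≤ ε / 3 := hk.le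
  have hb2 : ‖t⁻¹ • (NormedSpace.exp (t • Bop hG hsj k) x - x) - Bop hG hsj k x‖ < ε / 3 := by
    rw [← dist_eq_norm]; exact ht1
  rw [dist_eq_norm, hsplit]
  calc ‖_ + _ + _‖ ≤ ‖t⁻¹ • (Tlim hG hsj t x - Tn hG hsj k t x)‖
        + ‖t⁻¹ • (NormedSpace.exp (t • Bop hG hsj k) x - x) - Bop hG hsj k x‖
        + ‖Bop hG hsj k x - Acl D g x‖ := norm_add₃_le
    _ < ε / 3 + ε / 3 + ε / 3 :=
        add_lt_add (add_lt_add_of_le_of_lt hb1 hb2) hk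
    _ = ε := by ring

/-- a fixed point of the generator limit is zero. -/
lemma gen_fixed_zero {u : E}
    (h : Tendsto (fun t : ℝ => t⁻¹ • (Tlim hG hsj t u - u)) (𝓝[>] 0) (𝓝 u)) : u = 0 := by
  by_contra hu
  obtain ⟨φ, hφ1, hφ2⟩ := exists_dual_vector ℝ u (norm_ne_zero_iff.mpr hu)
  have hφu : φ u = ‖u‖ := by simpa using hφ2
  have happ : Tendsto (fun t : ℝ => φ (t⁻¹ • (Tlim hG hsj t u - u))) (𝓝[>] 0) (𝓝 (φ u)) :=
    (φ.continuous.tendsto _).comp h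
  have hle : ∀ᶠ t in 𝓝[>] (0:ℝ), φ (t⁻¹ • (Tlim hG hsj t u - u)) ≤ 0 := by
    filter_upwards [self_mem_nhdsWithin] with t (ht : 0 < t)
    have h1 : φ (t⁻¹ • (Tlim hG hsj t u - u)) = t⁻¹ * (φ (Tlim hG hsj t u) - φ u) := by
      rw [_root_.map_smul, map_sub]; simp [smul_eq_mul]
    rw [h1, hφu]
    have h2 : φ (Tlim hG hsj t u) ≤ ‖u‖ := by
      calc φ (Tlim hG hsj t u) ≤ |φ (Tlim hG hsj t u)| := le_abs_self _
        _ ≤ ‖φ‖ * ‖Tlim hG hsj t u‖ := by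
            rw [← Real.norm_eq_abs]; exact φ.le_opNorm _
        _ = ‖Tlim hG hsj t u‖ := by rw [hφ1, one_mul]
        _ ≤ ‖Tlim hG hsj t‖ * ‖u‖ := ContinuousLinearMap.le_opNorm _ _
        _ ≤ 1 * ‖u‖ := mul_le_mul_of_nonneg_right (Tlim_norm hG hsj t) (norm_nonneg _)
        _ = ‖u‖ := one_mul _
    have h3 : φ (Tlim hG hsj t u) - ‖u‖ ≤ 0 := by linarith
    exact mul_nonpos_of_nonneg_of_nonpos (by positivity) h3
  have : φ u ≤ 0 := le_of_tendsto happ hle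
  rw [hφu] at this
  exact hu (norm_le_zero_iff.mp this)

/-- maximality: every point where the generator limit exists lies in `Dcl`. -/
lemma gen_mem {x y : E}
    (h : Tendsto (fun t : ℝ => t⁻¹ • (Tlim hG hsj t x - x)) (𝓝[>] 0) (𝓝 y)) :
    x ∈ Dcl D g := by
  obtain ⟨w, hw, hwspec⟩ := hsj 1 one_pos (x - y)
  rw [one_smul] at hwspec
  have hgw := Tlim_genlim hG hsj hw
  have hcomb : Tendsto (fun t : ℝ => t⁻¹ • (Tlim hG hsj t (x - w) - (x - w))) (𝓝[>] 0)
      (𝓝 (y - Acl D g w)) := by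
    have heq : (fun t : ℝ => t⁻¹ • (Tlim hG hsj t (x - w) - (x - w)))
        = fun t : ℝ => t⁻¹ • (Tlim hG hsj t x - x) - t⁻¹ • (Tlim hG hsj t w - w) := by
      funext t
      rw [map_sub, ← smul_sub]
      congr 1
      abel
    rw [heq]
    exact h.sub hgw
  have hval : y - Acl D g w = x - w := by
    have hAw : Acl D g w = w - (x - y) := (sub_rot hwspec).symm
    rw [hAw]
    abel
  rw [hval] at hcomb
  have hzero := gen_fixed_zero hG hsj hcomb
  have : x = w := by rwa [sub_eq_zero] at hzero
  rw [this]
  exact hw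

end Generator

end LP13

namespace LP13

variable {E : Type*} [NormedAddCommGroup E] [NormedSpace ℝ E]

/-- the graph shear homeomorphism `(x, y) ↦ (x, y + ω • x)`. -/
def shear (ω : ℝ) : (E × E) ≃ₜ (E × E) where
  toFun p := (p.1, p.2 + ω • p.1)
  invFun p := (p.1, p.2 - ω • p.1)
  left_inv p := by simp
  right_inv p := by simp
  continuous_toFun := by
    apply Continuous.prodMk continuous_fst
    exact continuous_snd.add (continuous_fst.const_smul ω)
  continuous_invFun := by
    apply Continuous.prodMk continuous_fst
    exact continuous_snd.sub (continuous_fst.const_smul ω)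

lemma shear_image (D : Set E) (f : E → E) (ω : ℝ) :
    opGraph D (fun z => f z + ω • z) = (shear ω) '' opGraph D f := by
  ext ⟨a, b⟩
  constructor
  · rintro ⟨ha, hb⟩
    simp only at ha hb
    refine ⟨(a, f a), ⟨ha, rfl⟩, ?_⟩
    simp only [shear, Homeomorph.homeomorph_mk_coe, Equiv.coe_fn_mk, Prod.mk.injEq]
    exact ⟨by trivial, hb.symm⟩
  · rintro ⟨⟨x, y⟩, ⟨hx, hy⟩, heq⟩
    simp only at hx hy
    simp only [shear, Homeomorph.homeomorph_mk_coe, Equiv.coe_fn_mk, Prod.mk.injEq] at heq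
    obtain ⟨h1, h2⟩ := heq
    subst h1
    refine ⟨hx, ?_⟩
    simp only
    rw [← h2, hy]

lemma shift_graph_mem {D : Set E} {f : E → E} (ω : ℝ) {x y : E} :
    (x, y) ∈ closure (opGraph D f)
      ↔ (x, y + ω • x) ∈ closure (opGraph D (fun z => f z + ω • z)) := by
  rw [shear_image D f ω, ← Homeomorph.image_closure]
  constructor
  · intro h
    exact ⟨(x, y), h, rfl⟩
  · intro h
    obtain ⟨p, hp, hpe⟩ := h
    have hinv : p = (x, y) := by
      apply (shear (E := E) ω).injective
      rw [hpe]
      simp [shear]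
    rwa [hinv] at hp

end LP13


section FinalHelpers

lemma sg_norm_bound {E V : Type*} [NormedAddCommGroup E] [NormedSpace ℝ E]
    [NormedAddCommGroup V] [NormedSpace ℝ V]
    {T : ℝ} {A : HypData E V} {ω : ℝ} (h1 : Hyp1' T A ω)
    {τ : ℝ} (hτ : τ ∈ Icc (0:ℝ) T) {s : ℝ} (hs : 0 ≤ s) :
    ‖A.sg τ s‖ ≤ Real.exp (-ω * s) := by
  have hst := h1.2 1 (fun _ => τ) (fun _ => s) monotone_const (fun _ => hτ) (fun _ => hs)
  simpa using hst

lemma exp_slope_tendsto (c : ℝ) :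
    Filter.Tendsto (fun t : ℝ => t⁻¹ * (Real.exp (c * t) - 1)) (nhdsWithin 0 (Set.Ioi 0))
      (nhds c) := by
  have hd : HasDerivAt (fun t : ℝ => Real.exp (c * t)) c 0 := by
    have h1 : HasDerivAt (fun t : ℝ => c * t) c 0 := by
      simpa using (hasDerivAt_id (0:ℝ)).const_mul c
    have h2 := h1.exp
    simpa using h2
  have hs := hasDerivAt_iff_tendsto_slope.mp hd
  have hmono : nhdsWithin (0:ℝ) (Set.Ioi 0) ≤ nhdsWithin (0:ℝ) {(0:ℝ)}ᶜ :=
    nhdsWithin_mono 0 (fun t ht => ne_of_gt ht)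
  apply (hs.mono_left hmono).congr'
  filter_upwards [self_mem_nhdsWithin] with t ht
  rw [slope_def_field]
  simp [div_eq_inv_mul]

end FinalHelpers


/-- Remark 2(b): under (Hyp'1), (Hyp3) and (Hyp4), the averaged operator
`A₀ = (1/T)∫₀ᵀ A(τ)dτ`, viewed as an operator in `E` with domain `V`, is closable and its
closure `Â` generates a C₀ semigroup with `‖S_Â(t)‖ ≤ e^{−ωt}`. -/
theorem statement_13
    {E : Type*} [NormedAddCommGroup E] [NormedSpace ℝ E] [CompleteSpace E]
    {V : Type*} [NormedAddCommGroup V] [NormedSpace ℝ V] [CompleteSpace V]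
    (ι : V →L[ℝ] E) (hιinj : Function.Injective ι) (hιdense : DenseRange ι)
    (T : ℝ) (hT : 0 < T)
    (A : HypData E V) (ω : ℝ)
    (hgen : HypGen T A)
    (h1 : Hyp1' T A ω)
    (h3 : Hyp3 ι T A)
    (h4 : Hyp4 ι T A ω)
    -- `f` represents `A₀` as an operator in `E` with domain `ι(V)`
    (f : E → E) (hf : ∀ v : V, f (ι v) = timeAvg T A v) :
    IsClosableOp (Set.range ι) f ∧
      ∃ (D' : Set E) (A' : E → E) (S : ℝ → E →L[ℝ] E),
        IsClosureOf D' A' (Set.range ι) f ∧ IsC0Semigroup S ∧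
        IsGeneratorOf D' A' S ∧
        ∀ t ≥ (0 : ℝ), ‖S t‖ ≤ Real.exp (-ω * t) := by
  classical
  obtain ⟨μ0, hμ0, hdense4⟩ := h4
  have hω : 0 < ω := h1.1
  set D : Set E := Set.range ι with hD
  set g' : E → E := fun x => f x + ω • x with hg'
  -- linearity of g' on D
  have hlin : IsLinearOp D g' := by
    refine ⟨⟨0, map_zero ι⟩, ?_, ?_⟩
    · rintro x ⟨u, rfl⟩ y ⟨v, rfl⟩
      have hsum : ι u + ι v = ι (u + v) := (map_add ι u v).symm
      refine ⟨⟨u + v, hsum.symm⟩, ?_⟩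
      show f (ι u + ι v) + ω • (ι u + ι v) = (f (ι u) + ω • ι u) + (f (ι v) + ω • ι v)
      rw [hsum, hf, map_add, ← hf u, ← hf v, ← hsum, smul_add]
      abel
    · rintro c x ⟨v, rfl⟩
      have hsm : c • ι v = ι (c • v) := (map_smul ι c v).symm
      refine ⟨⟨c • v, hsm.symm⟩, ?_⟩
      show f (c • ι v) + ω • (c • ι v) = c • (f (ι v) + ω • ι v)
      rw [hsm, hf, _root_.map_smul, ← hf v, ← hsm]
      rw [smul_add]
      congr 1
      rw [smul_comm]
  -- dissipativity
  have hdiss : ∀ x ∈ D, ∀ l : ℝ, 0 < l → l * ‖x‖ ≤ ‖l • x - g' x‖ := by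
    rintro x ⟨v, rfl⟩ l hl
    rcases eq_or_ne (ι v) 0 with h0 | h0
    · rw [h0]; simp
    obtain ⟨φ, hφ1, hφ2⟩ := exists_dual_vector ℝ (ι v) (norm_ne_zero_iff.mpr h0)
    have hφx : φ (ι v) = ‖ι v‖ := by simpa using hφ2
    have hφle : ∀ z : E, φ z ≤ ‖z‖ := by
      intro z
      calc φ z ≤ |φ z| := le_abs_self _
        _ ≤ ‖φ‖ * ‖z‖ := by rw [← Real.norm_eq_abs]; exact φ.le_opNorm z
        _ = ‖z‖ := by rw [hφ1, one_mul]
    have hkey : ∀ τ ∈ Icc (0:ℝ) T, φ (A.bdd τ v) ≤ -ω * ‖ι v‖ := by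
      intro τ hτ
      have hdom := (h3.1 τ hτ v).1
      have hop := (h3.1 τ hτ v).2
      have hlim : GenLimitAt (A.sg τ) (ι v) (A.bdd τ v) := by
        have hgl := (hgen τ hτ).2.2 (ι v) hdom
        rwa [hop] at hgl
      have happ : Tendsto (fun s : ℝ => φ (s⁻¹ • (A.sg τ s (ι v) - ι v))) (𝓝[>] 0)
          (𝓝 (φ (A.bdd τ v))) := (φ.continuous.tendsto _).comp hlim
      have hcmp : Tendsto (fun s : ℝ => (s⁻¹ * (Real.exp (-ω * s) - 1)) * ‖ι v‖) (𝓝[>] 0)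
          (𝓝 (-ω * ‖ι v‖)) := by
        have := (exp_slope_tendsto (-ω)).mul_const ‖ι v‖
        simpa using this
      refine le_of_tendsto_of_tendsto happ hcmp ?_
      filter_upwards [self_mem_nhdsWithin] with s (hs : 0 < s)
      have he1 : φ (s⁻¹ • (A.sg τ s (ι v) - ι v)) = s⁻¹ * (φ (A.sg τ s (ι v)) - ‖ι v‖) := by
        rw [_root_.map_smul, map_sub, hφx]; simp [smul_eq_mul]
      rw [he1]
      have he2 : φ (A.sg τ s (ι v)) ≤ Real.exp (-ω * s) * ‖ι v‖ := by
        refine le_trans (hφle _) ?_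
        calc ‖A.sg τ s (ι v)‖ ≤ ‖A.sg τ s‖ * ‖ι v‖ := ContinuousLinearMap.le_opNorm _ _
          _ ≤ Real.exp (-ω * s) * ‖ι v‖ :=
            mul_le_mul_of_nonneg_right (sg_norm_bound h1 hτ hs.le) (norm_nonneg _)
      calc s⁻¹ * (φ (A.sg τ s (ι v)) - ‖ι v‖)
          ≤ s⁻¹ * (Real.exp (-ω * s) * ‖ι v‖ - ‖ι v‖) := by
            apply mul_le_mul_of_nonneg_left (by linarith) (by positivity)
        _ = (s⁻¹ * (Real.exp (-ω * s) - 1)) * ‖ι v‖ := by ring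
    have hbddcont : ContinuousOn (fun τ => A.bdd τ v) (Icc (0:ℝ) T) :=
      (ContinuousLinearMap.apply ℝ E v).continuous.comp_continuousOn h3.2
    have hIntOp : IntervalIntegrable A.bdd MeasureTheory.volume 0 T := by
      apply ContinuousOn.intervalIntegrable
      rw [uIcc_of_le hT.le]
      exact h3.2
    have hIntv : IntervalIntegrable (fun τ => A.bdd τ v) MeasureTheory.volume 0 T := by
      apply ContinuousOn.intervalIntegrable
      rwa [uIcc_of_le hT.le]
    have hIntφ : IntervalIntegrable (fun τ => φ (A.bdd τ v)) MeasureTheory.volume 0 T := by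
      apply ContinuousOn.intervalIntegrable
      rw [uIcc_of_le hT.le]
      exact φ.continuous.comp_continuousOn hbddcont
    have havg : φ (timeAvg T A v) = (1/T) * ∫ τ in (0:ℝ)..T, φ (A.bdd τ v) := by
      rw [timeAvg, ContinuousLinearMap.smul_apply, _root_.map_smul, smul_eq_mul]
      congr 1
      rw [ContinuousLinearMap.intervalIntegral_apply hIntOp v]
      exact (φ.intervalIntegral_comp_comm hIntv).symm
    have hboundint : (∫ τ in (0:ℝ)..T, φ (A.bdd τ v)) ≤ T * (-ω * ‖ι v‖) := by
      have hmono := intervalIntegral.integral_mono_on hT.le hIntφ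
        (intervalIntegrable_const (c := -ω * ‖ι v‖)) hkey
      refine le_trans hmono ?_
      rw [intervalIntegral.integral_const, smul_eq_mul, sub_zero]
    have hφavg : φ (timeAvg T A v) ≤ -ω * ‖ι v‖ := by
      rw [havg]
      calc (1/T) * ∫ τ in (0:ℝ)..T, φ (A.bdd τ v)
          ≤ (1/T) * (T * (-ω * ‖ι v‖)) := by
            apply mul_le_mul_of_nonneg_left hboundint (by positivity)
        _ = -ω * ‖ι v‖ := by field_simp
    have hmain : l * ‖ι v‖ ≤ φ (l • ι v - g' (ι v)) := by
      have hφeq : φ (l • ι v - g' (ι v)) = l * ‖ι v‖ - φ (timeAvg T A v) - ω * ‖ι v‖ := by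
        show φ (l • ι v - (f (ι v) + ω • ι v)) = _
        rw [map_sub, _root_.map_smul, map_add, _root_.map_smul, hφx, hf]
        simp [smul_eq_mul]
        ring
      rw [hφeq]
      nlinarith [hφavg, norm_nonneg (ι v)]
    exact le_trans hmain (hφle _)
  have hGood : LP13.Good D g' := ⟨hlin, hιdense, hdiss⟩
  have hl0 : 0 < μ0 + ω := by linarith
  have hrange : Dense ((fun x => (μ0 + ω) • x - g' x) '' D) := by
    have himg : (fun x => (μ0 + ω) • x - g' x) '' D
        = Set.range (fun v : V => μ0 • ι v - timeAvg T A v) := by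
      ext z
      constructor
      · rintro ⟨x, ⟨v, rfl⟩, rfl⟩
        refine ⟨v, ?_⟩
        show μ0 • ι v - timeAvg T A v = (μ0 + ω) • ι v - (f (ι v) + ω • ι v)
        rw [hf]
        module
      · rintro ⟨v, rfl⟩
        refine ⟨ι v, ⟨v, rfl⟩, ?_⟩
        show (μ0 + ω) • ι v - (f (ι v) + ω • ι v) = μ0 • ι v - timeAvg T A v
        rw [hf]
        module
    rw [himg]
    exact hdense4
  have hsj := LP13.surj_all hGood hl0 hrange
  -- closability of f
  have hclosable : IsClosableOp D f := by
    intro x y₁ y₂ hy₁ hy₂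
    have h₁ := (LP13.shift_graph_mem ω).mp hy₁
    have h₂ := (LP13.shift_graph_mem ω).mp hy₂
    have hcc := LP13.closable hGood x _ _ h₁ h₂
    exact add_right_cancel hcc
  refine ⟨hclosable, LP13.Dcl D g', fun x => LP13.Acl D g' x - ω • x,
    fun t => Real.exp (-ω * t) • LP13.Tlim hGood hsj t, ?_, ?_, ?_, ?_⟩
  · -- IsClosureOf
    constructor
    · intro x
      constructor
      · intro hx
        refine ⟨LP13.Acl D g' x - ω • x, (LP13.shift_graph_mem ω).mpr ?_⟩
        have hcancel : LP13.Acl D g' x - ω • x + ω • x = LP13.Acl D g' x := by abel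
        rw [hcancel]
        exact LP13.Acl_spec hGood hx
      · rintro ⟨y, hy⟩
        exact ⟨y + ω • x, (LP13.shift_graph_mem ω).mp hy⟩
    · intro x hx
      apply (LP13.shift_graph_mem ω).mpr
      have hcancel : LP13.Acl D g' x - ω • x + ω • x = LP13.Acl D g' x := by abel
      rw [hcancel]
      exact LP13.Acl_spec hGood hx
  · -- IsC0Semigroup
    refine ⟨?_, ?_, ?_⟩
    · simp [LP13.Tlim_zero hGood hsj]
    · intro t s ht hs
      rw [LP13.Tlim_add hGood hsj ht hs]
      apply ContinuousLinearMap.ext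
      intro x
      simp only [ContinuousLinearMap.smul_apply, ContinuousLinearMap.comp_apply,
        ContinuousLinearMap.coe_comp', Function.comp_apply, _root_.map_smul]
      rw [smul_smul, ← Real.exp_add]
      congr 2
      ring
    · intro x
      apply Continuous.continuousOn
      have h1 : Continuous fun t : ℝ => Real.exp (-ω * t) :=
        Real.continuous_exp.comp (continuous_const.mul continuous_id)
      have h2 : (fun t : ℝ => (Real.exp (-ω * t) • LP13.Tlim hGood hsj t) x)
          = fun t : ℝ => Real.exp (-ω * t) • (LP13.Tlim hGood hsj t x) := by
        funext t; rw [ContinuousLinearMap.smul_apply]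
      rw [h2]
      exact h1.smul (LP13.Tlim_cont hGood hsj x)
  · -- IsGeneratorOf
    have hexp_lim : Tendsto (fun t : ℝ => Real.exp (-ω * t)) (𝓝[>] 0) (𝓝 1) := by
      have hc : Continuous fun t : ℝ => Real.exp (-ω * t) :=
        Real.continuous_exp.comp (continuous_const.mul continuous_id)
      have h2 := (hc.tendsto 0).mono_left (nhdsWithin_le_nhds (s := Set.Ioi (0:ℝ)))
      simpa using h2
    have hexp_lim' : Tendsto (fun t : ℝ => Real.exp (ω * t)) (𝓝[>] 0) (𝓝 1) := by
      have hc : Continuous fun t : ℝ => Real.exp (ω * t) :=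
        Real.continuous_exp.comp (continuous_const.mul continuous_id)
      have h2 := (hc.tendsto 0).mono_left (nhdsWithin_le_nhds (s := Set.Ioi (0:ℝ)))
      simpa using h2
    have hslope := exp_slope_tendsto (-ω)
    have hidentity : ∀ t : ℝ, ∀ x : E,
        t⁻¹ • ((Real.exp (-ω * t) • LP13.Tlim hGood hsj t) x - x)
          = Real.exp (-ω * t) • (t⁻¹ • (LP13.Tlim hGood hsj t x - x))
            + (t⁻¹ * (Real.exp (-ω * t) - 1)) • x := by
      intro t x
      rw [ContinuousLinearMap.smul_apply]
      module
    have hforward : ∀ x ∈ LP13.Dcl D g',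
        GenLimitAt (fun t => Real.exp (-ω * t) • LP13.Tlim hGood hsj t) x
          (LP13.Acl D g' x - ω • x) := by
      intro x hx
      show Tendsto _ (𝓝[>] 0) _
      have hmain := (hexp_lim.smul (LP13.Tlim_genlim hGood hsj hx)).add
        (hslope.smul_const x)
      have hval : (1:ℝ) • LP13.Acl D g' x + (-ω) • x = LP13.Acl D g' x - ω • x := by
        rw [one_smul, neg_smul]; abel
      rw [hval] at hmain
      apply hmain.congr
      intro t
      exact (hidentity t x).symm
    have hreverse : ∀ x y : E,
        GenLimitAt (fun t => Real.exp (-ω * t) • LP13.Tlim hGood hsj t) x y →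
          x ∈ LP13.Dcl D g' := by
      intro x y hy
      have hlimT : Tendsto (fun t : ℝ => t⁻¹ • (LP13.Tlim hGood hsj t x - x)) (𝓝[>] 0)
          (𝓝 (y + ω • x)) := by
        have hmain := hexp_lim'.smul (hy.sub (hslope.smul_const x))
        have hval : (1:ℝ) • (y - (-ω) • x) = y + ω • x := by
          rw [one_smul, neg_smul]; abel
        rw [hval] at hmain
        apply hmain.congr
        intro t
        rw [hidentity t x, add_sub_cancel_right, smul_smul, ← Real.exp_add]
        have hzero : ω * t + -ω * t = 0 := by ring
        rw [hzero, Real.exp_zero, one_smul]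
      exact LP13.gen_mem hGood hsj hlimT
    constructor
    · intro x
      constructor
      · intro hx
        exact ⟨LP13.Acl D g' x - ω • x, hforward x hx⟩
      · rintro ⟨y, hy⟩
        exact hreverse x y hy
    · exact hforward
  · -- norm bound
    intro t ht
    have hns := norm_smul (Real.exp (-ω * t)) (LP13.Tlim hGood hsj t)
    rw [hns, Real.norm_eq_abs, abs_of_pos (Real.exp_pos _)]
    calc Real.exp (-ω * t) * ‖LP13.Tlim hGood hsj t‖
        ≤ Real.exp (-ω * t) * 1 :=
          mul_le_mul_of_nonneg_left (LP13.Tlim_norm hGood hsj t) (Real.exp_pos _).le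
      _ = Real.exp (-ω * t) := mul_one _
end
end

section
/- Let T>0, E a Banach space, V a Banach space densely and continuously embedded in E, and {A(t)}_{t∈[0,T]} a family of linear operators on E satisfying (Hyp'1) with constant ω>0, (Hyp3) and (Hyp4), and let Â denote the closure of A_0 := (1/T)∫_0^T A(τ)dτ (with domain V) in E. Then the interval (−ω,+∞) is contained in the resolvent set of Â, and for every μ > −ω the set (μI − A_0)V is dense in E. -/
open Filter Topology Set MeasureTheory

noncomputable section

variable {E : Type*} [NormedAddCommGroup E] [NormedSpace ℝ E]

variable {V : Type*} [NormedAddCommGroup V] [NormedSpace ℝ V]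

variable (ι : V →L[ℝ] E)

/-! ### Auxiliary lemmas for Statement 14 -/

lemma aux_sg_norm {T : ℝ} {A : HypData E V} {ω : ℝ} (h1 : Hyp1' T A ω)
    {t : ℝ} (ht : t ∈ Icc (0:ℝ) T) {s : ℝ} (hs : 0 ≤ s) :
    ‖A.sg t s‖ ≤ Real.exp (-ω * s) := by
  have h := h1.2 1 (fun _ => t) (fun _ => s) monotone_const (fun _ => ht) (fun _ => hs)
  simpa using h

lemma aux_diss {T : ℝ} {A : HypData E V} {ω : ℝ}
    (hgen : HypGen T A) (h1 : Hyp1' T A ω) (h3 : Hyp3 ι T A)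
    {t : ℝ} (ht : t ∈ Icc (0:ℝ) T) (v : V)
    (g : E →L[ℝ] ℝ) (hg1 : ‖g‖ = 1) (hgx : g (ι v) = ‖ι v‖) :
    g (A.bdd t v) ≤ -ω * ‖ι v‖ := by
  set x := ι v with hxdef
  have hdom := h3.1 t ht v
  have hlim : GenLimitAt (A.sg t) x (A.bdd t v) := by
    have h0 := (hgen t ht).2.2 x hdom.1
    rwa [hdom.2] at h0
  have h2 : Tendsto (fun s : ℝ => g (s⁻¹ • (A.sg t s x - x))) (𝓝[>] 0)
      (𝓝 (g (A.bdd t v))) := (g.continuous.tendsto _).comp hlim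
  have h3' : Tendsto (fun s : ℝ => (Real.exp (-ω * s) - 1) / s * ‖x‖) (𝓝[>] 0)
      (𝓝 (-ω * ‖x‖)) := by
    have hd : HasDerivAt (fun s : ℝ => Real.exp (-ω * s)) (-ω) 0 := by
      have := ((hasDerivAt_id (0:ℝ)).const_mul (-ω)).exp
      simpa using this
    have hslope : Tendsto (slope (fun s : ℝ => Real.exp (-ω*s)) 0) (𝓝[≠] 0) (𝓝 (-ω)) :=
      hasDerivAt_iff_tendsto_slope.mp hd
    have hmono : 𝓝[>] (0:ℝ) ≤ 𝓝[≠] (0:ℝ) :=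
      nhdsWithin_mono 0 (fun y hy => ne_of_gt hy)
    have hres := (hslope.mono_left hmono).mul_const ‖x‖
    refine hres.congr (fun s => ?_)
    rw [slope_def_field]
    simp [div_eq_inv_mul]
  have hev : ∀ᶠ s in 𝓝[>] (0:ℝ),
      g (s⁻¹ • (A.sg t s x - x)) ≤ (Real.exp (-ω*s) - 1)/s * ‖x‖ := by
    filter_upwards [self_mem_nhdsWithin] with s hs'
    have hspos : (0:ℝ) < s := hs'
    have hb : g (A.sg t s x) ≤ Real.exp (-ω * s) * ‖x‖ := by
      calc g (A.sg t s x) ≤ |g (A.sg t s x)| := le_abs_self _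
        _ ≤ ‖g‖ * ‖A.sg t s x‖ := by
            rw [← Real.norm_eq_abs]; exact g.le_opNorm _
        _ = ‖A.sg t s x‖ := by rw [hg1, one_mul]
        _ ≤ ‖A.sg t s‖ * ‖x‖ := (A.sg t s).le_opNorm x
        _ ≤ Real.exp (-ω*s) * ‖x‖ :=
            mul_le_mul_of_nonneg_right (aux_sg_norm h1 ht hspos.le) (norm_nonneg x)
    have heq : g (s⁻¹ • (A.sg t s x - x)) = s⁻¹ * (g (A.sg t s x) - ‖x‖) := by
      rw [_root_.map_smul, map_sub, hgx, smul_eq_mul]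
    rw [heq]
    have h4 : g (A.sg t s x) - ‖x‖ ≤ Real.exp (-ω*s) * ‖x‖ - ‖x‖ := by linarith
    calc s⁻¹ * (g (A.sg t s x) - ‖x‖) ≤ s⁻¹ * (Real.exp (-ω*s) * ‖x‖ - ‖x‖) :=
          mul_le_mul_of_nonneg_left h4 (inv_nonneg.mpr hspos.le)
      _ = (Real.exp (-ω*s) - 1)/s * ‖x‖ := by field_simp
  exact le_of_tendsto_of_tendsto h2 h3' hev

lemma aux_lowerV [CompleteSpace E] {T : ℝ} (hT : 0 < T) {A : HypData E V} {ω : ℝ}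
    (hgen : HypGen T A) (h1 : Hyp1' T A ω) (h3 : Hyp3 ι T A)
    {μ : ℝ} (hμ : -ω < μ) (v : V) :
    (μ + ω) * ‖ι v‖ ≤ ‖μ • ι v - timeAvg T A v‖ := by
  rcases eq_or_ne (ι v) 0 with h0 | h0
  · simp only [h0, norm_zero, mul_zero]; positivity
  obtain ⟨g, hg1, hgx⟩ := exists_dual_vector ℝ (ι v) (norm_ne_zero_iff.mpr h0)
  have hgx' : g (ι v) = ‖ι v‖ := by simpa using hgx
  have hvcont : ContinuousOn (fun τ => A.bdd τ v) (Icc 0 T) :=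
    (ContinuousLinearMap.apply ℝ E v).continuous.comp_continuousOn h3.2
  have hOpInt : IntervalIntegrable A.bdd volume 0 T :=
    h3.2.intervalIntegrable_of_Icc hT.le
  have hvInt : IntervalIntegrable (fun τ => A.bdd τ v) volume 0 T :=
    hvcont.intervalIntegrable_of_Icc hT.le
  have h5 : g (timeAvg T A v) = (1/T) * ∫ τ in (0:ℝ)..T, g (A.bdd τ v) := by
    rw [timeAvg, ContinuousLinearMap.smul_apply,
      ContinuousLinearMap.intervalIntegral_apply hOpInt v, _root_.map_smul,
      ContinuousLinearMap.intervalIntegral_comp_comm g hvInt, smul_eq_mul]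
  have hle : ∀ τ ∈ Icc (0:ℝ) T, g (A.bdd τ v) ≤ -ω * ‖ι v‖ := fun τ hτ =>
    aux_diss ι hgen h1 h3 hτ v g hg1 hgx'
  have hint2 : IntervalIntegrable (fun τ => g (A.bdd τ v)) volume 0 T :=
    (g.continuous.comp_continuousOn hvcont).intervalIntegrable_of_Icc hT.le
  have h6 : (∫ τ in (0:ℝ)..T, g (A.bdd τ v)) ≤ T * (-ω * ‖ι v‖) := by
    have := intervalIntegral.integral_mono_on hT.le hint2 intervalIntegrable_const hle
    simp only [intervalIntegral.integral_const, smul_eq_mul, sub_zero] at this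
    linarith
  have h7 : g (timeAvg T A v) ≤ -ω * ‖ι v‖ := by
    rw [h5]
    have h1T : (0:ℝ) < 1/T := by positivity
    calc (1/T) * ∫ τ in (0:ℝ)..T, g (A.bdd τ v) ≤ (1/T) * (T * (-ω*‖ι v‖)) :=
          mul_le_mul_of_nonneg_left h6 h1T.le
      _ = -ω * ‖ι v‖ := by field_simp
  have h8 : (μ + ω) * ‖ι v‖ ≤ g (μ • ι v - timeAvg T A v) := by
    rw [map_sub, _root_.map_smul, hgx', smul_eq_mul]
    nlinarith [h7]
  calc (μ+ω)*‖ι v‖ ≤ g (μ • ι v - timeAvg T A v) := h8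
    _ ≤ |g (μ • ι v - timeAvg T A v)| := le_abs_self _
    _ ≤ ‖g‖ * ‖μ • ι v - timeAvg T A v‖ := by
        rw [← Real.norm_eq_abs]; exact g.le_opNorm _
    _ = ‖μ • ι v - timeAvg T A v‖ := by rw [hg1, one_mul]

set_option maxHeartbeats 2000000 in
/-- Remark 2(c): under (Hyp'1), (Hyp3) and (Hyp4), the interval `(−ω,∞)`
is contained in the resolvent set of `Â` (the closure of `A₀` with domain `V`), and for every
`μ > −ω` the set `(μI − A₀)V` is dense in `E`. -/
theorem statement_14
    {E : Type*} [NormedAddCommGroup E] [NormedSpace ℝ E] [CompleteSpace E]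
    {V : Type*} [NormedAddCommGroup V] [NormedSpace ℝ V] [CompleteSpace V]
    (ι : V →L[ℝ] E) (hιinj : Function.Injective ι) (hιdense : DenseRange ι)
    (T : ℝ) (hT : 0 < T)
    (A : HypData E V) (ω : ℝ)
    (hgen : HypGen T A)
    (h1 : Hyp1' T A ω)
    (h3 : Hyp3 ι T A)
    (h4 : Hyp4 ι T A ω)
    -- `f` represents `A₀` as an operator in `E` with domain `ι(V)`, and `(D', A')` is its closure
    (f : E → E) (hf : ∀ v : V, f (ι v) = timeAvg T A v)
    (D' : Set E) (A' : E → E) (hclos : IsClosureOf D' A' (Set.range ι) f) :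
    ∀ μ : ℝ, -ω < μ →
      (∃ B : E →L[ℝ] E,
        (∀ y : E, B y ∈ D' ∧ μ • B y - A' (B y) = y) ∧
        (∀ x ∈ D', B (μ • x - A' x) = x)) ∧
      Dense (Set.range fun v : V => μ • ι v - timeAvg T A v) := by
    -- the graph of `A₀` as a set, and its closure
  set G : Set (E × E) := opGraph (Set.range ι) f with hGdef
  have hGmem : ∀ p : E × E, p ∈ G ↔ ∃ v : V, ι v = p.1 ∧ timeAvg T A v = p.2 := by
    intro p
    constructor
    · rintro ⟨⟨v, hv⟩, hp2⟩
      exact ⟨v, hv, by rw [hp2, ← hv, hf]⟩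
    · rintro ⟨v, hv1, hv2⟩
      exact ⟨⟨v, hv1⟩, by rw [← hv1, hf v]; exact hv2.symm⟩
  -- `G` is (the coercion of) a submodule
  have hGS : G = ((LinearMap.range (((ι.prod (timeAvg T A)) : V →L[ℝ] E × E) : V →ₗ[ℝ] E × E)
      : Submodule ℝ (E × E)) : Set (E × E)) := by
    ext p
    rw [hGmem p, SetLike.mem_coe, LinearMap.mem_range]
    constructor
    · rintro ⟨v, hv1, hv2⟩
      exact ⟨v, Prod.ext hv1 hv2⟩
    · rintro ⟨v, hv⟩
      exact ⟨v, congrArg Prod.fst hv, congrArg Prod.snd hv⟩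
  have hclGadd : ∀ p q : E × E, p ∈ closure G → q ∈ closure G → p + q ∈ closure G := by
    intro p q hp hq
    rw [hGS, ← Submodule.topologicalClosure_coe] at hp hq ⊢
    exact Submodule.add_mem _ hp hq
  have hclGsub : ∀ p q : E × E, p ∈ closure G → q ∈ closure G → p - q ∈ closure G := by
    intro p q hp hq
    rw [hGS, ← Submodule.topologicalClosure_coe] at hp hq ⊢
    exact Submodule.sub_mem _ hp hq
  have hclGsmul : ∀ (c : ℝ) (p : E × E), p ∈ closure G → c • p ∈ closure G := by
    intro c p hp
    rw [hGS, ← Submodule.topologicalClosure_coe] at hp ⊢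
    exact Submodule.smul_mem _ c hp
  have hmemG : ∀ v : V, (ι v, timeAvg T A v) ∈ closure G :=
    fun v => subset_closure ((hGmem _).2 ⟨v, rfl, rfl⟩)
  have lowV : ∀ ν : ℝ, -ω < ν → ∀ v : V,
      (ν + ω) * ‖ι v‖ ≤ ‖ν • ι v - timeAvg T A v‖ :=
    fun ν hν v => aux_lowerV ι hT hgen h1 h3 hν v
  -- the lower bound passes to the closure of the graph
  have lowC : ∀ ν : ℝ, -ω < ν → ∀ x y : E, (x, y) ∈ closure G →
      (ν + ω) * ‖x‖ ≤ ‖ν • x - y‖ := by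
    intro ν hν x y hxy
    have hCcl : IsClosed {q : E × E | (ν + ω) * ‖q.1‖ ≤ ‖ν • q.1 - q.2‖} :=
      isClosed_le (continuous_const.mul continuous_fst.norm)
        ((continuous_fst.const_smul ν).sub continuous_snd).norm
    have hsub : G ⊆ {q : E × E | (ν + ω) * ‖q.1‖ ≤ ‖ν • q.1 - q.2‖} := by
      intro q hq
      obtain ⟨v, hv1, hv2⟩ := (hGmem q).1 hq
      show (ν + ω) * ‖q.1‖ ≤ ‖ν • q.1 - q.2‖
      rw [← hv1, ← hv2]
      exact lowV ν hν v
    exact closure_minimal hsub hCcl hxy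
  have hω : (0:ℝ) < ω := h1.1
  -- closability
  have huniq : ∀ x y₁ y₂ : E, (x, y₁) ∈ closure G → (x, y₂) ∈ closure G → y₁ = y₂ := by
    intro x y₁ y₂ hy1 hy2
    have hy : ((0:E), y₁ - y₂) ∈ closure G := by
      have := hclGsub _ _ hy1 hy2
      simpa using this
    set y := y₁ - y₂ with hydef
    have key : ∀ w : V, ‖ι w‖ ≤ ‖ι w - y‖ := by
      intro w
      have hall : ∀ ν : ℝ, 0 < ν → ‖ι w‖ ≤ ‖ι w - y‖ + ν⁻¹ * ‖timeAvg T A w‖ := by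
        intro ν hν0
        have hq : (ν⁻¹ • ι w, ν⁻¹ • timeAvg T A w + y) ∈ closure G := by
          have h1' := hclGsmul ν⁻¹ _ (hmemG w)
          have h2' := hclGadd _ _ h1' hy
          simpa using h2'
        have h2'' := lowC ν (by linarith) _ _ hq
        rw [smul_smul, mul_inv_cancel₀ (ne_of_gt hν0), one_smul] at h2''
        have hn : ‖ν⁻¹ • ι w‖ = ν⁻¹ * ‖ι w‖ := by
          rw [norm_smul, Real.norm_eq_abs, abs_of_pos (by positivity)]
        rw [hn] at h2''
        have hge : ‖ι w‖ ≤ (ν + ω) * (ν⁻¹ * ‖ι w‖) := by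
          have h1'' : (1:ℝ) ≤ (ν + ω) * ν⁻¹ := by
            rw [← div_eq_mul_inv, le_div_iff₀ hν0]
            linarith
          nlinarith [norm_nonneg (ι w)]
        have htri : ‖ι w - (ν⁻¹ • timeAvg T A w + y)‖
            ≤ ‖ι w - y‖ + ‖ν⁻¹ • timeAvg T A w‖ := by
          have heq : ι w - (ν⁻¹ • timeAvg T A w + y)
              = (ι w - y) - ν⁻¹ • timeAvg T A w := by abel
          rw [heq]; exact norm_sub_le _ _
        have hsm : ‖ν⁻¹ • timeAvg T A w‖ = ν⁻¹ * ‖timeAvg T A w‖ := by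
          rw [norm_smul, Real.norm_eq_abs, abs_of_pos (by positivity)]
        rw [hsm] at htri
        linarith
      have htend : Tendsto (fun ν : ℝ => ‖ι w - y‖ + ν⁻¹ * ‖timeAvg T A w‖) atTop
          (𝓝 (‖ι w - y‖ + 0 * ‖timeAvg T A w‖)) :=
        tendsto_const_nhds.add (tendsto_inv_atTop_zero.mul_const _)
      have := ge_of_tendsto htend
        (eventually_atTop.2 ⟨1, fun ν hν => hall ν (by linarith)⟩)
      simpa using this
    have hCy : IsClosed {z : E | ‖z‖ ≤ ‖z - y‖} :=
      isClosed_le continuous_norm ((continuous_id.sub continuous_const).norm)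
    have hsuby : Set.range ι ⊆ {z : E | ‖z‖ ≤ ‖z - y‖} := by
      rintro z ⟨w, rfl⟩; exact key w
    have hyin : y ∈ {z : E | ‖z‖ ≤ ‖z - y‖} :=
      closure_minimal hsuby hCy (hιdense y)
    have hy0 : ‖y‖ ≤ 0 := by simpa using hyin
    exact sub_eq_zero.mp (norm_le_zero_iff.mp hy0)
  -- facts about the closure operator (D', A')
  have hιD' : ∀ v : V, ι v ∈ D' := fun v => (hclos.1 _).2 ⟨_, hmemG v⟩
  have hA'ι : ∀ v : V, A' (ι v) = timeAvg T A v := fun v =>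
    huniq _ _ _ (hclos.2 _ (hιD' v)) (hmemG v)
  have hD'add : ∀ x ∈ D', ∀ z ∈ D', x + z ∈ D' ∧ A' (x + z) = A' x + A' z := by
    intro x hx z hz
    have hp := hclGadd _ _ (hclos.2 x hx) (hclos.2 z hz)
    have hp' : (x + z, A' x + A' z) ∈ closure G := hp
    have hm : x + z ∈ D' := (hclos.1 _).2 ⟨_, hp'⟩
    exact ⟨hm, huniq _ _ _ (hclos.2 _ hm) hp'⟩
  have hD'smul : ∀ (c : ℝ), ∀ x ∈ D', c • x ∈ D' ∧ A' (c • x) = c • A' x := by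
    intro c x hx
    have hp := hclGsmul c _ (hclos.2 x hx)
    have hp' : (c • x, c • A' x) ∈ closure G := hp
    have hm : c • x ∈ D' := (hclos.1 _).2 ⟨_, hp'⟩
    exact ⟨hm, huniq _ _ _ (hclos.2 _ hm) hp'⟩
  have lowD' : ∀ ν : ℝ, -ω < ν → ∀ x ∈ D', (ν + ω) * ‖x‖ ≤ ‖ν • x - A' x‖ :=
    fun ν hν x hx => lowC ν hν _ _ (hclos.2 x hx)
  have huniqx : ∀ ν : ℝ, -ω < ν → ∀ x₁ ∈ D', ∀ x₂ ∈ D',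
      ν • x₁ - A' x₁ = ν • x₂ - A' x₂ → x₁ = x₂ := by
    intro ν hν x₁ h₁ x₂ h₂ heq
    have hp : (x₁ - x₂, A' x₁ - A' x₂) ∈ closure G :=
      hclGsub _ _ (hclos.2 _ h₁) (hclos.2 _ h₂)
    have hl := lowC ν hν _ _ hp
    have hz : ν • (x₁ - x₂) - (A' x₁ - A' x₂)
        = (ν • x₁ - A' x₁) - (ν • x₂ - A' x₂) := by
      rw [smul_sub]; abel
    rw [hz, heq, sub_self, norm_zero] at hl
    have hn0 : ‖x₁ - x₂‖ = 0 := by nlinarith [norm_nonneg (x₁ - x₂)]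
    exact sub_eq_zero.mp (norm_eq_zero.mp hn0)
  -- surjectivity at μ₀
  obtain ⟨μ0, hμ0, hdense0⟩ := h4
  have hpos0 : (0:ℝ) < μ0 + ω := by linarith
  have hne0 : (μ0 + ω) ≠ 0 := ne_of_gt hpos0
  have hsurj0 : ∀ y : E, ∃ x ∈ D', μ0 • x - A' x = y := by
    have hRclosed : IsClosed {y : E | ∃ x ∈ D', μ0 • x - A' x = y} := by
      rw [← isSeqClosed_iff_isClosed]
      intro ys y hys hlim
      choose xs hxsD hxs using hys
      have hkey : ∀ n m, ‖xs n - xs m‖ ≤ (μ0 + ω)⁻¹ * ‖ys n - ys m‖ := by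
        intro n m
        have hp : (xs n - xs m, A' (xs n) - A' (xs m)) ∈ closure G :=
          hclGsub _ _ (hclos.2 _ (hxsD n)) (hclos.2 _ (hxsD m))
        have hl := lowC μ0 hμ0 _ _ hp
        have hz : μ0 • (xs n - xs m) - (A' (xs n) - A' (xs m))
            = (μ0 • xs n - A' (xs n)) - (μ0 • xs m - A' (xs m)) := by
          rw [smul_sub]; abel
        rw [hz, hxs n, hxs m] at hl
        calc ‖xs n - xs m‖ = (μ0+ω)⁻¹ * ((μ0+ω) * ‖xs n - xs m‖) :=
              (inv_mul_cancel_left₀ hne0 _).symm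
          _ ≤ (μ0+ω)⁻¹ * ‖ys n - ys m‖ :=
              mul_le_mul_of_nonneg_left hl (by positivity)
      have hcauchy : CauchySeq xs := by
        rw [Metric.cauchySeq_iff]
        intro ε hε
        have hyc : CauchySeq ys := hlim.cauchySeq
        rw [Metric.cauchySeq_iff] at hyc
        obtain ⟨N, hN⟩ := hyc (ε * (μ0 + ω)) (by positivity)
        refine ⟨N, fun m hm n hn => ?_⟩
        have h2'' := hN m hm n hn
        rw [dist_eq_norm] at h2'' ⊢
        calc ‖xs m - xs n‖ ≤ (μ0+ω)⁻¹ * ‖ys m - ys n‖ := hkey m n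
          _ < (μ0+ω)⁻¹ * (ε * (μ0+ω)) :=
              mul_lt_mul_of_pos_left h2'' (by positivity)
          _ = ε := by rw [mul_comm ε, inv_mul_cancel_left₀ hne0]
      obtain ⟨xl, hxl⟩ := cauchySeq_tendsto_of_complete hcauchy
      have heqA : ∀ n, A' (xs n) = μ0 • xs n - ys n := by
        intro n
        have h := hxs n
        rw [← h]; abel
      have hA'lim : Tendsto (fun n => A' (xs n)) atTop (𝓝 (μ0 • xl - y)) := by
        have h := (hxl.const_smul μ0).sub hlim
        exact h.congr (fun n => (heqA n).symm)
      have hpair : Tendsto (fun n => (xs n, A' (xs n))) atTop (𝓝 (xl, μ0 • xl - y)) :=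
        hxl.prodMk_nhds hA'lim
      have hmem : (xl, μ0 • xl - y) ∈ closure G :=
        isClosed_closure.mem_of_tendsto hpair
          (Eventually.of_forall fun n => hclos.2 _ (hxsD n))
      have hxD : xl ∈ D' := (hclos.1 _).2 ⟨_, hmem⟩
      refine ⟨xl, hxD, ?_⟩
      have h := huniq _ _ _ (hclos.2 _ hxD) hmem
      rw [h]; abel
    have hsubR : (Set.range fun v : V => μ0 • ι v - timeAvg T A v)
        ⊆ {y : E | ∃ x ∈ D', μ0 • x - A' x = y} := by
      rintro z ⟨v, rfl⟩
      exact ⟨ι v, hιD' v, by rw [hA'ι v]⟩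
    have hdR : Dense {y : E | ∃ x ∈ D', μ0 • x - A' x = y} :=
      Dense.mono hsubR hdense0
    intro y
    have hy := hdR y
    rwa [hRclosed.closure_eq] at hy
  -- from surjectivity to a bounded inverse
  have hbuild : ∀ ν : ℝ, -ω < ν → (∀ y : E, ∃ x ∈ D', ν • x - A' x = y) →
      ∃ B : E →L[ℝ] E, (∀ y : E, B y ∈ D' ∧ ν • B y - A' (B y) = y) ∧
        (∀ x ∈ D', B (ν • x - A' x) = x) := by
    intro ν hν hsurj
    have hpos : (0:ℝ) < ν + ω := by linarith
    have hne : (ν + ω) ≠ 0 := ne_of_gt hpos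
    choose Bf hBfD hBf using hsurj
    have hBadd : ∀ y z : E, Bf (y + z) = Bf y + Bf z := by
      intro y z
      have hm := hD'add _ (hBfD y) _ (hBfD z)
      apply huniqx ν hν _ (hBfD (y+z)) _ hm.1
      rw [hBf (y+z), hm.2]
      have hre : ν • (Bf y + Bf z) - (A' (Bf y) + A' (Bf z))
          = (ν • Bf y - A' (Bf y)) + (ν • Bf z - A' (Bf z)) := by
        rw [smul_add]; abel
      rw [hre, hBf y, hBf z]
    have hBsmul : ∀ (c : ℝ) (y : E), Bf (c • y) = c • Bf y := by
      intro c y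
      have hm := hD'smul c _ (hBfD y)
      apply huniqx ν hν _ (hBfD (c • y)) _ hm.1
      rw [hBf (c • y), hm.2]
      have hre : ν • (c • Bf y) - c • A' (Bf y) = c • (ν • Bf y - A' (Bf y)) := by
        rw [smul_comm ν c, smul_sub]
      rw [hre, hBf y]
    have hBbound : ∀ y : E, ‖Bf y‖ ≤ (ν+ω)⁻¹ * ‖y‖ := by
      intro y
      have hl := lowD' ν hν _ (hBfD y)
      rw [hBf y] at hl
      calc ‖Bf y‖ = (ν+ω)⁻¹ * ((ν+ω) * ‖Bf y‖) := (inv_mul_cancel_left₀ hne _).symm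
        _ ≤ (ν+ω)⁻¹ * ‖y‖ := mul_le_mul_of_nonneg_left hl (by positivity)
    refine ⟨LinearMap.mkContinuous
      { toFun := Bf, map_add' := hBadd, map_smul' := hBsmul } ((ν+ω)⁻¹) hBbound,
      fun y => ⟨hBfD y, hBf y⟩, ?_⟩
    intro x hx
    apply huniqx ν hν _ (hBfD _) _ hx
    rw [hBf]
  -- the perturbation step
  have hstep : ∀ ν : ℝ, -ω < ν →
      (∃ B : E →L[ℝ] E, (∀ y : E, B y ∈ D' ∧ ν • B y - A' (B y) = y) ∧
        (∀ x ∈ D', B (ν • x - A' x) = x)) →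
      ∀ ν' : ℝ, |ν' - ν| < ν + ω →
      (∃ B : E →L[ℝ] E, (∀ y : E, B y ∈ D' ∧ ν' • B y - A' (B y) = y) ∧
        (∀ x ∈ D', B (ν' • x - A' x) = x)) := by
    intro ν hν hB ν' hd
    obtain ⟨B, hB1, hB2⟩ := hB
    have hpos : (0:ℝ) < ν + ω := by linarith
    have hne : (ν + ω) ≠ 0 := ne_of_gt hpos
    have hBnorm : ‖B‖ ≤ (ν+ω)⁻¹ := by
      refine B.opNorm_le_bound (by positivity) (fun y => ?_)
      have hl := lowD' ν hν _ (hB1 y).1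
      rw [(hB1 y).2] at hl
      calc ‖B y‖ = (ν+ω)⁻¹ * ((ν+ω) * ‖B y‖) := (inv_mul_cancel_left₀ hne _).symm
        _ ≤ (ν+ω)⁻¹ * ‖y‖ := mul_le_mul_of_nonneg_left hl (by positivity)
    have ht : ‖-(((ν' - ν)) • B)‖ < 1 := by
      rw [norm_neg]
      calc ‖(ν' - ν) • B‖ ≤ ‖ν' - ν‖ * ‖B‖ := ContinuousLinearMap.opNorm_smul_le _ _
        _ ≤ |ν' - ν| * (ν+ω)⁻¹ := by
            rw [Real.norm_eq_abs]
            exact mul_le_mul_of_nonneg_left hBnorm (abs_nonneg _)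
        _ < (ν+ω) * (ν+ω)⁻¹ := mul_lt_mul_of_pos_right hd (by positivity)
        _ = 1 := mul_inv_cancel₀ hne
    set U : (E →L[ℝ] E)ˣ := Units.oneSub (-(((ν' - ν)) • B)) ht with hU
    have hUval : (U : E →L[ℝ] E) = 1 + (ν' - ν) • B := by
      rw [hU, Units.val_oneSub, sub_neg_eq_add]
    have hUinvU : ∀ w : E, (↑U⁻¹ : E →L[ℝ] E) ((↑U : E →L[ℝ] E) w) = w := by
      intro w
      have h := U.inv_mul
      calc (↑U⁻¹ : E →L[ℝ] E) ((↑U : E →L[ℝ] E) w)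
          = ((↑U⁻¹ * ↑U : E →L[ℝ] E)) w := rfl
        _ = w := by rw [h]; rfl
    have hUUinv : ∀ w : E, (↑U : E →L[ℝ] E) ((↑U⁻¹ : E →L[ℝ] E) w) = w := by
      intro w
      have h := U.mul_inv
      calc (↑U : E →L[ℝ] E) ((↑U⁻¹ : E →L[ℝ] E) w)
          = ((↑U * ↑U⁻¹ : E →L[ℝ] E)) w := rfl
        _ = w := by rw [h]; rfl
    refine ⟨B.comp (↑U⁻¹ : E →L[ℝ] E), ?_, ?_⟩
    · intro y
      set z := (↑U⁻¹ : E →L[ℝ] E) y with hz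
      have hUz : z + (ν' - ν) • B z = y := by
        have h := hUUinv y
        rw [hUval] at h
        simpa [ContinuousLinearMap.add_apply, ContinuousLinearMap.smul_apply] using h
      refine ⟨(hB1 z).1, ?_⟩
      show ν' • B z - A' (B z) = y
      have h2'' := (hB1 z).2
      calc ν' • B z - A' (B z) = (ν' - ν) • B z + (ν • B z - A' (B z)) := by
            rw [sub_smul]; abel
        _ = (ν' - ν) • B z + z := by rw [h2'']
        _ = y := by rw [add_comm]; exact hUz
    · intro x hx
      have hUx : (↑U : E →L[ℝ] E) (ν • x - A' x) = ν' • x - A' x := by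
        rw [hUval]
        simp only [ContinuousLinearMap.add_apply, ContinuousLinearMap.one_apply,
          ContinuousLinearMap.smul_apply]
        rw [hB2 x hx, sub_smul]
        abel
      show B ((↑U⁻¹ : E →L[ℝ] E) (ν' • x - A' x)) = x
      rw [← hUx, hUinvU, hB2 x hx]
  -- extend from μ₀ to all of (-ω, ∞)
  have hbase := hbuild μ0 hμ0 hsurj0
  have hmain : ∀ ν : ℝ, -ω < ν →
      ∃ B : E →L[ℝ] E, (∀ y : E, B y ∈ D' ∧ ν • B y - A' (B y) = y) ∧
        (∀ x ∈ D', B (ν • x - A' x) = x) := by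
    intro ν hν
    rcases le_or_gt μ0 ν with hle | hlt
    · set δ := (μ0 + ω)/2 with hδ
      have hδpos : (0:ℝ) < δ := by rw [hδ]; linarith
      have key : ∀ n : ℕ,
          ∃ B : E →L[ℝ] E,
            (∀ y : E, B y ∈ D' ∧ (min (μ0 + (n:ℝ) * δ) ν) • B y - A' (B y) = y) ∧
            (∀ x ∈ D', B ((min (μ0 + (n:ℝ) * δ) ν) • x - A' x) = x) := by
        intro n
        induction n with
        | zero =>
          simp only [Nat.cast_zero, zero_mul, add_zero, min_eq_left hle]
          exact hbase
        | succ n ih =>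
          have hcast : ((n+1 : ℕ) : ℝ) = (n:ℝ) + 1 := by push_cast; ring
          rw [hcast]
          set a := min (μ0 + (n:ℝ) * δ) ν with ha
          set b := min (μ0 + ((n:ℝ) + 1) * δ) ν with hb
          have hnd : (0:ℝ) ≤ (n:ℝ) * δ := by positivity
          have ha1 : μ0 ≤ a := le_min (by linarith) hle
          have hexp : ((n:ℝ) + 1) * δ = (n:ℝ) * δ + δ := by ring
          have hab : a ≤ b := min_le_min (by rw [hexp]; linarith) le_rfl
          have hba : b ≤ a + δ := by
            rw [ha, ← min_add_add_right]
            refine le_min ?_ ?_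
            · exact le_trans (min_le_left _ _) (by rw [hexp]; linarith)
            · exact le_trans (min_le_right _ _) (by linarith)
          have hstepb : |b - a| < a + ω := by
            rw [abs_of_nonneg (by linarith)]
            have hδlt : δ < μ0 + ω := by rw [hδ]; linarith
            linarith
          exact hstep a (by linarith) ih b hstepb
      obtain ⟨n, hn⟩ := exists_nat_ge ((ν - μ0)/δ)
      have hmin : min (μ0 + (n:ℝ) * δ) ν = ν := by
        refine min_eq_right ?_
        rw [div_le_iff₀ hδpos] at hn
        linarith
      have hk := key n
      rwa [hmin] at hk
    · set δ := (ν + ω)/2 with hδ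
      have hδpos : (0:ℝ) < δ := by rw [hδ]; linarith
      have key : ∀ n : ℕ,
          ∃ B : E →L[ℝ] E,
            (∀ y : E, B y ∈ D' ∧ (max (μ0 - (n:ℝ) * δ) ν) • B y - A' (B y) = y) ∧
            (∀ x ∈ D', B ((max (μ0 - (n:ℝ) * δ) ν) • x - A' x) = x) := by
        intro n
        induction n with
        | zero =>
          simp only [Nat.cast_zero, zero_mul, sub_zero, max_eq_left hlt.le]
          exact hbase
        | succ n ih =>
          have hcast : ((n+1 : ℕ) : ℝ) = (n:ℝ) + 1 := by push_cast; ring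
          rw [hcast]
          set a := max (μ0 - (n:ℝ) * δ) ν with ha
          set b := max (μ0 - ((n:ℝ) + 1) * δ) ν with hb
          have ha1 : ν ≤ a := le_max_right _ _
          have hexp : ((n:ℝ) + 1) * δ = (n:ℝ) * δ + δ := by ring
          have hba : b ≤ a := max_le_max (by rw [hexp]; linarith) le_rfl
          have hab : a ≤ b + δ := by
            rw [hb, ← max_add_add_right]
            refine max_le_max ?_ ?_
            · rw [hexp]; linarith
            · linarith
          have hstepb : |b - a| < a + ω := by
            rw [abs_of_nonpos (by linarith), neg_sub]
            have hδlt : δ < ν + ω := by rw [hδ]; linarith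
            linarith
          exact hstep a (by linarith) ih b hstepb
      obtain ⟨n, hn⟩ := exists_nat_ge ((μ0 - ν)/δ)
      have hmax : max (μ0 - (n:ℝ) * δ) ν = ν := by
        refine max_eq_right ?_
        rw [div_le_iff₀ hδpos] at hn
        linarith
      have hk := key n
      rwa [hmax] at hk
  -- conclusion
  intro μ hμ
  refine ⟨hmain μ hμ, ?_⟩
  obtain ⟨B, hB1, _⟩ := hmain μ hμ
  intro y
  have hx := hB1 y
  have hmem : (B y, A' (B y)) ∈ closure G := hclos.2 _ hx.1
  have hcont : Continuous fun p : E × E => μ • p.1 - p.2 :=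
    (continuous_fst.const_smul μ).sub continuous_snd
  have himg : y ∈ (fun p : E × E => μ • p.1 - p.2) '' closure G :=
    ⟨(B y, A' (B y)), hmem, hx.2⟩
  have h2'' := (image_closure_subset_closure_image hcont) himg
  have himgeq : (fun p : E × E => μ • p.1 - p.2) '' G
      = Set.range (fun v : V => μ • ι v - timeAvg T A v) := by
    ext z
    constructor
    · rintro ⟨p, hp, rfl⟩
      obtain ⟨v, hv1, hv2⟩ := (hGmem p).1 hp
      refine ⟨v, ?_⟩
      show μ • ι v - timeAvg T A v = μ • p.1 - p.2
      rw [hv1, hv2]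
    · rintro ⟨v, rfl⟩
      exact ⟨(ι v, timeAvg T A v), (hGmem _).2 ⟨v, rfl, rfl⟩, rfl⟩
  rwa [himgeq] at h2''
end
end

section
/- Let E be a Banach space and (T_n) a sequence of bounded linear operators on E such that for every x∈E the sequence (T_n x) is Cauchy. Then for every bounded set {x_n : n≥1} ⊂ E, β({T_n x_n : n≥1}) ≤ (limsup_{n→∞} ‖T_n‖) · β({x_n : n≥1}). -/
open Filter Topology Set

noncomputable section

variable {E : Type*} [NormedAddCommGroup E] [NormedSpace ℝ E]

lemma hausdorffMNC_nonneg (Q : Set E) : 0 ≤ hausdorffMNC Q :=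
  Real.sInf_nonneg fun _ hr => hr.1.le

lemma hausdorffMNC_le {Q : Set E} {r : ℝ} (hr : 0 < r)
    (h : ∃ c : Finset E, Q ⊆ ⋃ y ∈ c, Metric.ball y r) : hausdorffMNC Q ≤ r :=
  csInf_le ⟨0, fun _ hs => hs.1.le⟩ ⟨hr, h⟩

lemma hausdorffMNC_cover {Q : Set E} (hQ : Bornology.IsBounded Q) {δ : ℝ} (hδ : 0 < δ) :
    ∃ c : Finset E, Q ⊆ ⋃ y ∈ c, Metric.ball y (hausdorffMNC Q + δ) := by
  classical
  obtain ⟨R, hR0, hR⟩ := hQ.subset_ball_lt 0 0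
  have hne : Set.Nonempty {r : ℝ | 0 < r ∧ ∃ c : Finset E, Q ⊆ ⋃ y ∈ c, Metric.ball y r} := by
    refine ⟨R, hR0, {0}, ?_⟩
    simpa using hR
  have hbdd : BddBelow {r : ℝ | 0 < r ∧ ∃ c : Finset E, Q ⊆ ⋃ y ∈ c, Metric.ball y r} :=
    ⟨0, fun _ hs => hs.1.le⟩
  have hlt : hausdorffMNC Q < hausdorffMNC Q + δ := lt_add_of_pos_right _ hδ
  obtain ⟨r, ⟨hr0, c, hc⟩, hrlt⟩ := (csInf_lt_iff hbdd hne).1 hlt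
  refine ⟨c, hc.trans ?_⟩
  exact Set.iUnion₂_mono fun y _ => Metric.ball_subset_ball hrlt.le

/-- Lemma 7: if `(Tₙ)` are bounded linear operators such that `(Tₙ x)` is
Cauchy for every `x`, then for every bounded sequence `(xₙ)`,
`β({Tₙ xₙ : n ≥ 1}) ≤ (limsup ‖Tₙ‖) · β({xₙ : n ≥ 1})`. -/
theorem statement_16
    {E : Type*} [NormedAddCommGroup E] [NormedSpace ℝ E] [CompleteSpace E]
    (T : ℕ → E →L[ℝ] E)
    (hT : ∀ x : E, CauchySeq fun n => T n x)
    (x : ℕ → E) (hx : Bornology.IsBounded (Set.range x)) :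
    hausdorffMNC (Set.range fun n => T n (x n)) ≤
      (Filter.limsup (fun n => ‖T n‖) atTop) * hausdorffMNC (Set.range x) := by
  classical
  set L := Filter.limsup (fun n => ‖T n‖) atTop with hLdef
  set β := hausdorffMNC (Set.range x) with hβdef
  -- uniform bound on the operator norms
  obtain ⟨C, hC⟩ : ∃ C, ∀ n, ‖T n‖ ≤ C := by
    apply banach_steinhaus
    intro x0
    obtain ⟨C, hC⟩ := (isBounded_iff_forall_norm_le).1 (hT x0).isBounded_range
    exact ⟨C, fun n => hC _ (Set.mem_range_self n)⟩
  have hbdd : IsBoundedUnder (· ≤ ·) atTop (fun n => ‖T n‖) :=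
    ⟨C, Filter.eventually_map.mpr (Filter.Eventually.of_forall hC)⟩
  have hL0 : 0 ≤ L :=
    Filter.le_limsup_of_frequently_le (Filter.Frequently.of_forall fun n => norm_nonneg _) hbdd
  have hβ0 : 0 ≤ β := hausdorffMNC_nonneg _
  -- limits of the Cauchy sequences
  have hlim : ∀ y : E, ∃ a : E, Tendsto (fun n => T n y) atTop (𝓝 a) :=
    fun y => cauchySeq_tendsto_of_complete (hT y)
  choose ℓ hℓ using hlim
  refine le_of_forall_pos_le_add ?_
  intro ε hε
  set δ : ℝ := min 1 (ε / (L + β + 2)) with hδdef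
  have hden : (0:ℝ) < L + β + 2 := by linarith
  have hδ0 : 0 < δ := lt_min one_pos (div_pos hε hden)
  have hδ1 : δ ≤ 1 := min_le_left _ _
  have hδε : δ * (L + β + 2) ≤ ε := by
    have : δ ≤ ε / (L + β + 2) := min_le_right _ _
    calc δ * (L + β + 2) ≤ (ε / (L + β + 2)) * (L + β + 2) := by
          apply mul_le_mul_of_nonneg_right this hden.le
      _ = ε := div_mul_cancel₀ _ hden.ne'
  -- key arithmetic
  have harith : (L + δ) * (β + δ) + δ ≤ L * β + ε := by nlinarith
  -- eventually ‖T n‖ < L + δ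
  have hev : ∀ᶠ n in atTop, ‖T n‖ < L + δ :=
    Filter.eventually_lt_of_limsup_lt (by exact lt_add_of_pos_right L hδ0) hbdd
  obtain ⟨N0, hN0⟩ := Filter.eventually_atTop.1 hev
  -- cover of range x
  obtain ⟨c, hc⟩ := hausdorffMNC_cover hx hδ0
  -- uniform convergence index on the finite set c
  have hNy : ∀ y : E, ∃ N : ℕ, ∀ n ≥ N, dist (T n y) (ℓ y) < δ :=
    fun y => Metric.tendsto_atTop.1 (hℓ y) δ hδ0
  choose N hN using hNy
  set K : ℕ := max N0 (c.sup N) with hKdef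
  set r0 : ℝ := L * β + ε with hr0def
  have hr00 : 0 < r0 := by positivity
  refine hausdorffMNC_le hr00 ⟨(Finset.range K).image (fun n => T n (x n)) ∪ c.image ℓ, ?_⟩
  rintro _ ⟨n, rfl⟩
  simp only [Set.mem_iUnion, Finset.mem_union, Finset.mem_image, Finset.mem_range,
    exists_prop]
  by_cases hn : n < K
  · exact ⟨T n (x n), Or.inl ⟨n, hn, rfl⟩, Metric.mem_ball_self hr00⟩
  · push_neg at hn
    have hnN0 : N0 ≤ n := le_trans (le_max_left _ _) hn
    have hxn : x n ∈ ⋃ y ∈ c, Metric.ball y (β + δ) := hc (Set.mem_range_self n)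
    simp only [Set.mem_iUnion, exists_prop] at hxn
    obtain ⟨y, hy, hxy⟩ := hxn
    refine ⟨ℓ y, Or.inr ⟨y, hy, rfl⟩, ?_⟩
    have h1 : ‖T n (x n) - T n y‖ < (L + δ) * (β + δ) := by
      have hTn : ‖T n‖ < L + δ := hN0 n hnN0
      have : ‖T n (x n) - T n y‖ ≤ ‖T n‖ * ‖x n - y‖ := by
        rw [← map_sub]; exact (T n).le_opNorm _
      refine lt_of_le_of_lt this ?_
      have hxy' : ‖x n - y‖ < β + δ := by
        simpa [Metric.mem_ball, dist_eq_norm] using hxy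
      calc ‖T n‖ * ‖x n - y‖ ≤ ‖T n‖ * (β + δ) :=
            mul_le_mul_of_nonneg_left hxy'.le (norm_nonneg _)
        _ < (L + δ) * (β + δ) := by
            apply mul_lt_mul_of_pos_right hTn (by linarith)
    have h2 : dist (T n y) (ℓ y) < δ := hN y n (le_trans (Finset.le_sup hy) (le_trans (le_max_right _ _) hn))
    have : dist (T n (x n)) (ℓ y) < (L + δ) * (β + δ) + δ := by
      calc dist (T n (x n)) (ℓ y) ≤ dist (T n (x n)) (T n y) + dist (T n y) (ℓ y) :=
            dist_triangle _ _ _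
        _ < (L + δ) * (β + δ) + δ := by
            rw [dist_eq_norm]; exact add_lt_add h1 h2
    exact Metric.mem_ball.2 (lt_of_lt_of_le this harith)
end
end
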